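/- arXiv:1707.03945 — 6 statements merged into one kernel-verified Lean document; each statement's English description precedes it below -/
import Mathlib

section
/- Let α > 2, let n be a positive integer, let U : Fin n → ℝ with U i > 0 for all i, and let τ : Fin n → ℕ. Then 2 · ∫_0^∞ (1 − ∏_{i} (1 + U i · r^(−α))^(−τ i)) · r dr = Σ_{κ} (τ κ) · α · (U κ) · ∫_0^∞ r^(1−α) · ∏_{i} (1 + U i · r^(−α))^(−(τ i) − δ_{iκ}) dr, where δ_{iκ} equals 1 if i = κ and 0 otherwise, and the outer sum runs over κ ∈ Fin n. -/
open MeasureTheory Real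

private lemma one_sub_prod_le_sum_one_sub {ι : Type*} (s : Finset ι) (a : ι → ℝ)
    (h0 : ∀ i ∈ s, 0 ≤ a i) (h1 : ∀ i ∈ s, a i ≤ 1) :
    1 - ∏ i ∈ s, a i ≤ ∑ i ∈ s, (1 - a i) := by
  classical
  induction s using Finset.cons_induction with
  | empty => simp
  | cons i s his ih =>
    rw [Finset.prod_cons, Finset.sum_cons]
    have hp0 : 0 ≤ ∏ j ∈ s, a j :=
      Finset.prod_nonneg fun j hj => h0 j (Finset.mem_cons_of_mem hj)
    have hp1 : (∏ j ∈ s, a j) ≤ 1 :=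
      Finset.prod_le_one (fun j hj => h0 j (Finset.mem_cons_of_mem hj))
        (fun j hj => h1 j (Finset.mem_cons_of_mem hj))
    have hai0 : 0 ≤ a i := h0 i (Finset.mem_cons_self _ _)
    have hai1 : a i ≤ 1 := h1 i (Finset.mem_cons_self _ _)
    have ihh := ih (fun j hj => h0 j (Finset.mem_cons_of_mem hj))
      (fun j hj => h1 j (Finset.mem_cons_of_mem hj))
    nlinarith [mul_nonneg (sub_nonneg.2 hai1) (sub_nonneg.2 hp1)]

private lemma pow_sub_one_le_aux (x : ℝ) (hx : 0 ≤ x) :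
    ∀ t : ℕ, (1 + x) ^ t - 1 ≤ (t : ℝ) * x * (1 + x) ^ t := by
  intro t
  induction t with
  | zero => simp
  | succ t ih =>
    have hp : (0:ℝ) ≤ (1 + x) ^ t := pow_nonneg (by linarith) _
    rw [pow_succ]
    push_cast
    nlinarith [ih, mul_nonneg (mul_nonneg (Nat.cast_nonneg t : (0:ℝ) ≤ t) hx)
      (mul_nonneg hx hp), mul_nonneg hx (mul_nonneg hx hp), mul_nonneg hx hp]

theorem stmt_1 (α : ℝ) (hα : 2 < α) (n : ℕ) (hn : 0 < n)
    (U : Fin n → ℝ) (hU : ∀ i, 0 < U i) (τ : Fin n → ℕ) :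
    2 * (∫ r in Set.Ioi (0 : ℝ),
        (1 - ∏ i, (1 + U i * r ^ (-α)) ^ (-(τ i : ℝ))) * r) =
      ∑ κ : Fin n, (τ κ : ℝ) * α * U κ *
        ∫ r in Set.Ioi (0 : ℝ),
          r ^ (1 - α) *
            ∏ i, (1 + U i * r ^ (-α)) ^
              (-(τ i : ℝ) - if i = κ then 1 else 0) := by
  classical
  open Set Filter in
  set b : Fin n → ℝ → ℝ := fun i r => 1 + U i * r ^ (-α) with hbdef
  set F : ℝ → ℝ := fun r => ∏ i, b i r ^ (-(τ i : ℝ)) with hFdef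
  set G : Fin n → ℝ → ℝ :=
    fun κ r => ∏ i, b i r ^ (-(τ i : ℝ) - if i = κ then 1 else 0) with hGdef
  -- basic bounds
  have hb1 : ∀ (i : Fin n) (r : ℝ), 0 ≤ r → 1 ≤ b i r := by
    intro i r hr
    have : 0 ≤ U i * r ^ (-α) := mul_nonneg (hU i).le (rpow_nonneg hr _)
    simp only [hbdef]; linarith
  have hbpos : ∀ (i : Fin n) (r : ℝ), 0 ≤ r → 0 < b i r :=
    fun i r hr => lt_of_lt_of_le one_pos (hb1 i r hr)
  have hF0 : ∀ r : ℝ, 0 ≤ r → 0 ≤ F r :=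
    fun r hr => Finset.prod_nonneg fun i _ => rpow_nonneg (hbpos i r hr).le _
  have hF1 : ∀ r : ℝ, 0 ≤ r → F r ≤ 1 := by
    intro r hr
    exact Finset.prod_le_one (fun i _ => rpow_nonneg (hbpos i r hr).le _)
      (fun i _ => rpow_le_one_of_one_le_of_nonpos (hb1 i r hr)
        (neg_nonpos.2 (Nat.cast_nonneg _)))
  have hG0 : ∀ (κ : Fin n) (r : ℝ), 0 ≤ r → 0 ≤ G κ r :=
    fun κ r hr => Finset.prod_nonneg fun i _ => rpow_nonneg (hbpos i r hr).le _
  have hexp_nonpos : ∀ (i κ : Fin n), (-(τ i : ℝ) - if i = κ then 1 else 0) ≤ 0 := by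
    intro i κ
    have h1 : -(τ i : ℝ) ≤ 0 := neg_nonpos.2 (Nat.cast_nonneg _)
    have h2 : (0:ℝ) ≤ if i = κ then 1 else 0 := by positivity
    linarith
  have hG1 : ∀ (κ : Fin n) (r : ℝ), 0 ≤ r → G κ r ≤ 1 := by
    intro κ r hr
    exact Finset.prod_le_one (fun i _ => rpow_nonneg (hbpos i r hr).le _)
      (fun i _ => rpow_le_one_of_one_le_of_nonpos (hb1 i r hr) (hexp_nonpos i κ))
  -- splitting of G
  have hGsplit : ∀ (κ : Fin n) (r : ℝ),
      G κ r = b κ r ^ (-(τ κ : ℝ) - 1) *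
        ∏ j ∈ Finset.univ.erase κ, b j r ^ (-(τ j : ℝ)) := by
    intro κ r
    rw [hGdef]
    simp only
    rw [← Finset.mul_prod_erase Finset.univ _ (Finset.mem_univ κ)]
    congr 1
    · simp
    · refine Finset.prod_congr rfl fun j hj => ?_
      have : j ≠ κ := (Finset.mem_erase.mp hj).1
      simp [this]
  -- bound on G κ near 0
  have hGbound : ∀ (κ : Fin n) (r : ℝ), 0 < r → G κ r ≤ r ^ α / U κ := by
    intro κ r hr
    have hprod1 : (∏ j ∈ Finset.univ.erase κ, b j r ^ (-(τ j : ℝ))) ≤ 1 :=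
      Finset.prod_le_one (fun j _ => rpow_nonneg (hbpos j r hr.le).le _)
        (fun j _ => rpow_le_one_of_one_le_of_nonpos (hb1 j r hr.le)
          (neg_nonpos.2 (Nat.cast_nonneg _)))
    have hprod0 : 0 ≤ ∏ j ∈ Finset.univ.erase κ, b j r ^ (-(τ j : ℝ)) :=
      Finset.prod_nonneg fun j _ => rpow_nonneg (hbpos j r hr.le).le _
    have h2 : b κ r ^ (-(τ κ : ℝ) - 1) ≤ b κ r ^ (-1 : ℝ) := by
      refine rpow_le_rpow_of_exponent_le (hb1 κ r hr.le) ?_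
      have : (0:ℝ) ≤ (τ κ : ℝ) := Nat.cast_nonneg _
      linarith
    have h3 : b κ r ^ (-1 : ℝ) = (b κ r)⁻¹ := rpow_neg_one _
    have hx : 0 < U κ * r ^ (-α) := mul_pos (hU κ) (rpow_pos_of_pos hr _)
    have h4 : (b κ r)⁻¹ ≤ (U κ * r ^ (-α))⁻¹ := by
      apply inv_anti₀ hx
      simp only [hbdef]; linarith
    have h5 : (U κ * r ^ (-α))⁻¹ = r ^ α / U κ := by
      rw [mul_inv, rpow_neg hr.le, inv_inv]
      ring
    calc G κ r = b κ r ^ (-(τ κ : ℝ) - 1) *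
          ∏ j ∈ Finset.univ.erase κ, b j r ^ (-(τ j : ℝ)) := hGsplit κ r
      _ ≤ b κ r ^ (-(τ κ : ℝ) - 1) * 1 := by
          apply mul_le_mul_of_nonneg_left hprod1 (rpow_nonneg (hbpos κ r hr.le).le _)
      _ = b κ r ^ (-(τ κ : ℝ) - 1) := mul_one _
      _ ≤ (U κ * r ^ (-α))⁻¹ := by rw [← h5] at h5 ⊢; exact (h2.trans (le_of_eq h3)).trans h4
      _ = r ^ α / U κ := h5
  -- bound on 1 - F
  set C : ℝ := ∑ i, (τ i : ℝ) * U i with hCdef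
  have hC0 : 0 ≤ C :=
    Finset.sum_nonneg fun i _ => mul_nonneg (Nat.cast_nonneg _) (hU i).le
  have h1F : ∀ r : ℝ, 0 < r → 1 - F r ≤ C * r ^ (-α) := by
    intro r hr
    have key : ∀ i : Fin n, 1 - b i r ^ (-(τ i : ℝ)) ≤ (τ i : ℝ) * (U i * r ^ (-α)) := by
      intro i
      set x : ℝ := U i * r ^ (-α) with hxdef
      have hx0 : 0 < x := mul_pos (hU i) (rpow_pos_of_pos hr _)
      have hbern : 1 + (τ i : ℝ) * x ≤ (1 + x) ^ (τ i) :=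
        one_add_mul_le_pow (by linarith) (τ i)
      have hbx : b i r = 1 + x := rfl
      have hrw : b i r ^ (-(τ i : ℝ)) = ((1 + x) ^ (τ i) : ℝ)⁻¹ := by
        rw [hbx, ← rpow_natCast (1 + x) (τ i), ← rpow_neg (by linarith)]
      have hpow_pos : (0:ℝ) < (1 + x) ^ (τ i) := pow_pos (by linarith) _
      have haux := pow_sub_one_le_aux x hx0.le (τ i)
      have hmul : ((1 + x) ^ (τ i) : ℝ) * ((1 + x) ^ (τ i) : ℝ)⁻¹ = 1 :=
        mul_inv_cancel₀ hpow_pos.ne'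
      have hinvnn : (0:ℝ) ≤ ((1 + x) ^ (τ i) : ℝ)⁻¹ := by positivity
      have hlast : 1 - ((1 + x) ^ (τ i) : ℝ)⁻¹ ≤ (τ i : ℝ) * x := by
        have h := mul_le_mul_of_nonneg_right haux hinvnn
        rw [sub_mul, mul_assoc, hmul] at h
        linarith
      rw [hrw]
      linarith
    have hmain : 1 - F r ≤ ∑ i, (1 - b i r ^ (-(τ i : ℝ))) :=
      one_sub_prod_le_sum_one_sub _ _
        (fun i _ => rpow_nonneg (hbpos i r hr.le).le _)
        (fun i _ => rpow_le_one_of_one_le_of_nonpos (hb1 i r hr.le)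
          (neg_nonpos.2 (Nat.cast_nonneg _)))
    have hsum : ∑ i, (1 - b i r ^ (-(τ i : ℝ))) ≤ C * r ^ (-α) := by
      rw [hCdef, Finset.sum_mul]
      exact Finset.sum_le_sum fun i _ => (key i).trans (le_of_eq (by ring))
    linarith
  -- derivative of F
  have hFder : ∀ r ∈ Ioi (0:ℝ), HasDerivAt F
      (∑ κ, (τ κ : ℝ) * α * U κ * (r ^ (-α - 1) * G κ r)) r := by
    intro r hr
    have hr0 : (0:ℝ) < r := hr
    have hbd : ∀ i : Fin n,
        HasDerivAt (fun s => b i s) (U i * (-α * r ^ (-α - 1))) r := by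
      intro i
      have h := (Real.hasDerivAt_rpow_const (p := -α) (Or.inl hr0.ne')).const_mul (U i)
      exact h.const_add 1
    have had : ∀ i : Fin n,
        HasDerivAt (fun s => b i s ^ (-(τ i : ℝ)))
          ((U i * (-α * r ^ (-α - 1))) * (-(τ i : ℝ)) * b i r ^ (-(τ i : ℝ) - 1)) r :=
      fun i => (hbd i).rpow_const (Or.inl (hbpos i r hr0.le).ne')
    have h := HasDerivAt.fun_finsetProd (u := Finset.univ) (fun i _ => had i)
    refine h.congr_deriv (Eq.symm ?_)
    refine Finset.sum_congr rfl fun κ _ => ?_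
    rw [smul_eq_mul, hGsplit κ r]
    ring
  -- continuity facts on Ioi 0
  have hbcont : ∀ i : Fin n, ContinuousOn (fun r => b i r) (Ioi (0:ℝ)) := by
    intro i
    apply continuousOn_const.add
    exact continuousOn_const.mul (continuousOn_id.rpow_const fun x hx => Or.inl (ne_of_gt hx))
  have hGcont : ∀ κ : Fin n, ContinuousOn (G κ) (Ioi (0:ℝ)) := by
    intro κ
    apply continuousOn_finset_prod
    intro i _
    exact (hbcont i).rpow_const fun x hx => Or.inl (hbpos i x (le_of_lt hx)).ne'
  have hFcont : ContinuousOn F (Ioi (0:ℝ)) := by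
    apply continuousOn_finset_prod
    intro i _
    exact (hbcont i).rpow_const fun x hx => Or.inl (hbpos i x (le_of_lt hx)).ne'
  have hrpow_cont : ∀ p : ℝ, ContinuousOn (fun r : ℝ => r ^ p) (Ioi (0:ℝ)) :=
    fun p => continuousOn_id.rpow_const fun x hx => Or.inl (ne_of_gt hx)
  -- integrability of each g κ
  have hIg : ∀ κ : Fin n, IntegrableOn (fun r => r ^ (1 - α) * G κ r) (Ioi (0:ℝ)) := by
    intro κ
    have hcont : ContinuousOn (fun r => r ^ (1 - α) * G κ r) (Ioi (0:ℝ)) :=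
      (hrpow_cont (1 - α)).mul (hGcont κ)
    rw [← Ioc_union_Ioi_eq_Ioi (zero_le_one)]
    apply IntegrableOn.union
    · -- on Ioc 0 1, bounded by 1 / U κ
      apply Integrable.mono' (g := fun _ => 1 / U κ)
        (integrableOn_const measure_Ioc_lt_top.ne)
        ((hcont.mono (Ioc_subset_Ioi_self)).aestronglyMeasurable measurableSet_Ioc)
      filter_upwards [ae_restrict_mem measurableSet_Ioc] with r hrm
      obtain ⟨hr0, hr1⟩ := hrm
      have h1 : 0 ≤ r ^ (1 - α) * G κ r :=
        mul_nonneg (rpow_nonneg hr0.le _) (hG0 κ r hr0.le)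
      have h2 : r ^ (1 - α) * G κ r ≤ r ^ (1 - α) * (r ^ α / U κ) :=
        mul_le_mul_of_nonneg_left (hGbound κ r hr0) (rpow_nonneg hr0.le _)
      have h3 : r ^ (1 - α) * (r ^ α / U κ) = r / U κ := by
        rw [div_eq_mul_inv, ← mul_assoc, ← rpow_add hr0]
        norm_num
        exact (div_eq_mul_inv r _).symm
      have h4 : r / U κ ≤ 1 / U κ := by gcongr; exact (hU κ).le
      rw [Real.norm_eq_abs, abs_of_nonneg h1]
      calc r ^ (1 - α) * G κ r ≤ r / U κ := by rw [← h3]; exact h2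
        _ ≤ 1 / U κ := h4
    · -- on Ioi 1, dominated by r ^ (1 - α)
      apply Integrable.mono'
        (integrableOn_Ioi_rpow_of_lt (a := 1 - α) (by linarith) one_pos)
      · exact (hcont.mono (show Ioi (1:ℝ) ⊆ Ioi 0 from fun x (hx : 1 < x) => show 0 < x from lt_trans one_pos hx)).aestronglyMeasurable measurableSet_Ioi
      · filter_upwards [ae_restrict_mem measurableSet_Ioi] with r hrm
        have hr0 : (0:ℝ) < r := lt_trans one_pos hrm
        have h1 : 0 ≤ r ^ (1 - α) * G κ r :=
          mul_nonneg (rpow_nonneg hr0.le _) (hG0 κ r hr0.le)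
        rw [Real.norm_eq_abs, abs_of_nonneg h1]
        calc r ^ (1 - α) * G κ r ≤ r ^ (1 - α) * 1 :=
              mul_le_mul_of_nonneg_left (hG1 κ r hr0.le) (rpow_nonneg hr0.le _)
          _ = r ^ (1 - α) := mul_one _
  -- integrability of h
  have hIh : IntegrableOn (fun r => r * (1 - F r)) (Ioi (0:ℝ)) := by
    have hcont : ContinuousOn (fun r => r * (1 - F r)) (Ioi (0:ℝ)) :=
      continuousOn_id.mul (continuousOn_const.sub hFcont)
    rw [← Ioc_union_Ioi_eq_Ioi (zero_le_one)]
    apply IntegrableOn.union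
    · apply Integrable.mono' (g := fun _ => (1:ℝ))
        (integrableOn_const measure_Ioc_lt_top.ne)
        ((hcont.mono (Ioc_subset_Ioi_self)).aestronglyMeasurable measurableSet_Ioc)
      filter_upwards [ae_restrict_mem measurableSet_Ioc] with r hrm
      obtain ⟨hr0, hr1⟩ := hrm
      have h1 : 0 ≤ r * (1 - F r) :=
        mul_nonneg hr0.le (by linarith [hF1 r hr0.le])
      rw [Real.norm_eq_abs, abs_of_nonneg h1]
      have : 1 - F r ≤ 1 := by linarith [hF0 r hr0.le]
      nlinarith
    · apply Integrable.mono'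
        ((integrableOn_Ioi_rpow_of_lt (show 1 - α < -1 by linarith) one_pos).const_mul C)
      · exact (hcont.mono (show Ioi (1:ℝ) ⊆ Ioi 0 from fun x (hx : 1 < x) => show 0 < x from lt_trans one_pos hx)).aestronglyMeasurable measurableSet_Ioi
      · filter_upwards [ae_restrict_mem measurableSet_Ioi] with r hrm
        have hr0 : (0:ℝ) < r := lt_trans one_pos hrm
        have h1 : 0 ≤ r * (1 - F r) := mul_nonneg hr0.le (by linarith [hF1 r hr0.le])
        rw [Real.norm_eq_abs, abs_of_nonneg h1]
        have h2 : r * (1 - F r) ≤ r * (C * r ^ (-α)) :=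
          mul_le_mul_of_nonneg_left (h1F r hr0) hr0.le
        have h3 : r * (C * r ^ (-α)) = C * r ^ (1 - α) := by
          rw [show (1:ℝ) - α = 1 + -α by ring, rpow_add hr0, rpow_one]
          ring
        calc r * (1 - F r) ≤ r * (C * r ^ (-α)) := h2
          _ = C * r ^ (1 - α) := h3
  -- integrability of the sum
  have hIsum : IntegrableOn
      (fun r => ∑ κ, ((τ κ : ℝ) * α * U κ / 2) * (r ^ (1 - α) * G κ r)) (Ioi (0:ℝ)) :=
    integrable_finset_sum _ fun κ _ => (hIg κ).const_mul _
  -- the FTC argument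
  set f : ℝ → ℝ := fun r => r ^ 2 / 2 * (1 - F r) with hfdef
  set ψ : ℝ → ℝ := fun r =>
    r * (1 - F r) - ∑ κ, ((τ κ : ℝ) * α * U κ / 2) * (r ^ (1 - α) * G κ r) with hψdef
  have hderiv : ∀ r ∈ Ioi (0:ℝ), HasDerivAt f (ψ r) r := by
    intro r hr
    have hr0 : (0:ℝ) < r := hr
    have h1 := ((hasDerivAt_pow 2 r).div_const 2).mul
      ((hasDerivAt_const r (1:ℝ)).sub (hFder r hr))
    refine h1.congr_deriv (Eq.symm ?_)
    have hr2 : (r : ℝ) ^ (2:ℕ) * r ^ (-α - 1) = r ^ (1 - α) := by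
      rw [← rpow_natCast r 2, ← rpow_add hr0]
      norm_num
      ring_nf
    have hterm : ∀ κ : Fin n, ((τ κ : ℝ) * α * U κ / 2) * (r ^ (1 - α) * G κ r)
        = (r ^ (2:ℕ) / 2) * ((τ κ : ℝ) * α * U κ * (r ^ (-α - 1) * G κ r)) := by
      intro κ
      rw [← hr2]; ring
    have hsum : ∑ κ, ((τ κ : ℝ) * α * U κ / 2) * (r ^ (1 - α) * G κ r)
        = r ^ (2:ℕ) / 2 * ∑ κ, (τ κ : ℝ) * α * U κ * (r ^ (-α - 1) * G κ r) := by
      rw [Finset.mul_sum]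
      exact Finset.sum_congr rfl fun κ _ => hterm κ
    rw [hψdef]
    simp only
    rw [hsum]
    push_cast
    simp only [Pi.sub_apply]
    ring
  have hcont0 : ContinuousWithinAt f (Ici (0:ℝ)) 0 := by
    have hf0 : f 0 = 0 := by simp [hfdef]
    unfold ContinuousWithinAt
    rw [hf0]
    apply squeeze_zero' (g := fun r => r ^ 2 / 2)
    · filter_upwards [self_mem_nhdsWithin] with r hr
      exact mul_nonneg (by positivity) (by linarith [hF1 r hr])
    · filter_upwards [self_mem_nhdsWithin] with r hr
      have h1 : 1 - F r ≤ 1 := by linarith [hF0 r hr]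
      have h2 : (0:ℝ) ≤ r ^ 2 / 2 := by positivity
      show r ^ 2 / 2 * (1 - F r) ≤ r ^ 2 / 2
      nlinarith [mul_nonneg h2 (hF0 r hr)]
    · have : Filter.Tendsto (fun r : ℝ => r ^ 2 / 2) (nhds 0) (nhds 0) := by
        have := ((continuous_pow 2).div_const 2).tendsto (0:ℝ)
        simpa using this
      exact this.mono_left nhdsWithin_le_nhds
  have htend : Filter.Tendsto f Filter.atTop (nhds 0) := by
    apply squeeze_zero' (g := fun r => C / 2 * r ^ (2 - α))
    · filter_upwards [Filter.eventually_ge_atTop (1:ℝ)] with r hr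
      have hr0 : (0:ℝ) < r := lt_of_lt_of_le one_pos hr
      exact mul_nonneg (by positivity) (by linarith [hF1 r hr0.le])
    · filter_upwards [Filter.eventually_ge_atTop (1:ℝ)] with r hr
      have hr0 : (0:ℝ) < r := lt_of_lt_of_le one_pos hr
      have h2 : r ^ 2 / 2 * (1 - F r) ≤ r ^ 2 / 2 * (C * r ^ (-α)) :=
        mul_le_mul_of_nonneg_left (h1F r hr0) (by positivity)
      have h3 : r ^ 2 / 2 * (C * r ^ (-α)) = C / 2 * r ^ (2 - α) := by
        rw [← rpow_natCast r 2]
        rw [show (2 - α) = (2:ℝ) + (-α) by ring, rpow_add hr0]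
        ring
      calc f r ≤ r ^ 2 / 2 * (C * r ^ (-α)) := h2
        _ = C / 2 * r ^ (2 - α) := h3
    · have h := (tendsto_rpow_neg_atTop (show (0:ℝ) < α - 2 by linarith)).const_mul (C / 2)
      rw [mul_zero] at h
      convert h using 2 with r
      · rw [show (2 - α) = -(α - 2) by ring]
  have hIψ : IntegrableOn ψ (Ioi (0:ℝ)) := hIh.sub hIsum
  have hFTC := integral_Ioi_of_hasDerivAt_of_tendsto hcont0 hderiv hIψ htend
  have hf0 : f 0 = 0 := by simp [hfdef]
  rw [hf0, sub_zero] at hFTC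
  -- split the integral of ψ
  have hsplit : ∫ r in Ioi (0:ℝ), ψ r =
      (∫ r in Ioi (0:ℝ), r * (1 - F r)) -
      ∫ r in Ioi (0:ℝ), ∑ κ, ((τ κ : ℝ) * α * U κ / 2) * (r ^ (1 - α) * G κ r) :=
    integral_sub hIh hIsum
  have hintsum : ∫ r in Ioi (0:ℝ), ∑ κ, ((τ κ : ℝ) * α * U κ / 2) * (r ^ (1 - α) * G κ r)
      = ∑ κ, ((τ κ : ℝ) * α * U κ / 2) * ∫ r in Ioi (0:ℝ), r ^ (1 - α) * G κ r := by
    rw [integral_finset_sum _ fun κ _ => (hIg κ).const_mul _]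
    exact Finset.sum_congr rfl fun κ _ => integral_const_mul _ _
  have hkey : (∫ r in Ioi (0:ℝ), r * (1 - F r)) =
      ∑ κ, ((τ κ : ℝ) * α * U κ / 2) * ∫ r in Ioi (0:ℝ), r ^ (1 - α) * G κ r := by
    rw [← hintsum]
    have := hsplit.symm.trans hFTC
    linarith
  have hcomm : (∫ r in Ioi (0:ℝ), (1 - F r) * r) = ∫ r in Ioi (0:ℝ), r * (1 - F r) := by
    congr 1
    funext r
    ring
  calc 2 * ∫ r in Ioi (0:ℝ), (1 - F r) * r
      = 2 * ∫ r in Ioi (0:ℝ), r * (1 - F r) := by rw [hcomm]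
    _ = 2 * ∑ κ, ((τ κ : ℝ) * α * U κ / 2) * ∫ r in Ioi (0:ℝ), r ^ (1 - α) * G κ r := by
        rw [hkey]
    _ = ∑ κ, (τ κ : ℝ) * α * U κ * ∫ r in Ioi (0:ℝ), r ^ (1 - α) * G κ r := by
        rw [Finset.mul_sum]
        exact Finset.sum_congr rfl fun κ _ => by ring
end

section
/- Let α > 2, let n be a positive integer, let U : Fin n → ℝ with U i > 0 for all i, let τ : Fin n → ℕ, and fix κ ∈ Fin n. Let μ ∈ Fin n be an index such that U μ = max_{i} U i. Then ∫_0^∞ s^(T + 2/α − 1) · ∏_{i} (s + U i)^(−(τ i) − δ_{iκ}) ds = (U μ)^(2/α − 1) · ∫_0^1 z^(−2/α) · (1 − z)^(T + 2/α − 1) · ∏_{i ≠ μ} (1 − (1 − (U i)/(U μ)) · z)^(−(τ i) − δ_{iκ}) dz, where T = Σ_{i} τ i and δ_{iκ} equals 1 if i = κ and 0 otherwise. -/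
open MeasureTheory Real

private lemma aux_alg (a b zz P T c : ℝ) (ha : 0 < a) (hz : 0 < zz) (hb : 0 ≤ b) :
    a * zz ^ (-2 : ℝ) * ((a * b / zz) ^ (T + c - 1) * (a ^ (-T - 1) * zz ^ (T + 1) * P)) =
      a ^ (c - 1) * (zz ^ (-c) * b ^ (T + c - 1) * P) := by
  rw [Real.div_rpow (by positivity) hz.le, Real.mul_rpow ha.le hb,
    div_eq_mul_inv, ← Real.rpow_neg hz.le]
  have hA : a * a ^ (c - 2 : ℝ) = a ^ (c - 1) := by
    nth_rewrite 1 [← Real.rpow_one a]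
    rw [← Real.rpow_add ha]; congr 1; ring
  have e1 : a ^ (T + c - 1) * a ^ (-T - 1) = a ^ (c - 2 : ℝ) := by
    rw [← Real.rpow_add ha]; congr 1; ring
  have e2 : zz ^ (-2 : ℝ) * (zz ^ (-(T + c - 1)) * zz ^ (T + 1)) = zz ^ (-c) := by
    rw [← Real.rpow_add hz, ← Real.rpow_add hz]; congr 1; ring
  rw [← hA, ← e1, ← e2]; ring

theorem stmt_3 (α : ℝ) (hα : 2 < α) (n : ℕ) (hn : 0 < n)
    (U : Fin n → ℝ) (hU : ∀ i, 0 < U i) (τ : Fin n → ℕ) (κ : Fin n)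
    (μ : Fin n) (hμ : ∀ i, U i ≤ U μ) :
    (∫ s in Set.Ioi (0 : ℝ),
        s ^ ((∑ i, (τ i : ℝ)) + 2 / α - 1) *
          ∏ i, (s + U i) ^ (-(τ i : ℝ) - if i = κ then 1 else 0)) =
      U μ ^ (2 / α - 1) *
        ∫ z in Set.Ioo (0 : ℝ) 1,
          z ^ (-(2 / α)) * (1 - z) ^ ((∑ i, (τ i : ℝ)) + 2 / α - 1) *
            ∏ i ∈ Finset.univ.erase μ,
              (1 - (1 - U i / U μ) * z) ^
                (-(τ i : ℝ) - if i = κ then 1 else 0) := by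
  have hUμ : 0 < U μ := hU μ
  set c : ℝ := 2 / α with hc
  set T : ℝ := ∑ i, (τ i : ℝ) with hT
  set e : Fin n → ℝ := fun i => -(τ i : ℝ) - if i = κ then 1 else 0 with he
  set g : ℝ → ℝ := fun z => U μ / z - U μ with hg
  have himg : g '' Set.Ioo (0:ℝ) 1 = Set.Ioi (0:ℝ) := by
    ext s
    constructor
    · rintro ⟨z, ⟨hz0, hz1⟩, rfl⟩
      simp only [hg, Set.mem_Ioi]
      have : U μ < U μ / z := by
        rw [lt_div_iff₀ hz0]
        nlinarith
      linarith
    · intro hs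
      simp only [Set.mem_Ioi] at hs
      refine ⟨U μ / (s + U μ), ⟨?_, ?_⟩, ?_⟩
      · positivity
      · rw [div_lt_one (by linarith)]; linarith
      · simp only [hg]
        rw [div_div_eq_mul_div, mul_comm (U μ) (s + U μ), mul_div_assoc,
          div_self hUμ.ne', mul_one]
        ring
  have hinj : Set.InjOn g (Set.Ioo (0:ℝ) 1) := by
    rintro z1 ⟨h1, _⟩ z2 ⟨h2, _⟩ h
    simp only [hg, sub_left_inj] at h
    field_simp at h
    linarith
  have hderiv : ∀ z ∈ Set.Ioo (0:ℝ) 1,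
      HasDerivWithinAt g (-(U μ / z ^ 2)) (Set.Ioo (0:ℝ) 1) z := by
    intro z ⟨hz0, hz1⟩
    have : HasDerivAt g (U μ * (-(z ^ 2)⁻¹)) z := by
      simpa [hg, div_eq_mul_inv] using ((hasDerivAt_inv hz0.ne').const_mul (U μ)).sub_const (U μ)
    have := this.hasDerivWithinAt (s := Set.Ioo (0:ℝ) 1)
    rw [show -(U μ / z ^ 2) = U μ * -(z ^ 2)⁻¹ by ring]
    exact this
  rw [← himg, integral_image_eq_integral_abs_deriv_smul measurableSet_Ioo hderiv hinj,
    ← MeasureTheory.integral_const_mul]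
  refine MeasureTheory.setIntegral_congr_fun measurableSet_Ioo ?_
  rintro z ⟨hz0, hz1⟩
  have hz1' : (0:ℝ) < 1 - z := by linarith
  have key : ∀ i : Fin n, (-(τ i : ℝ) - if i = κ then 1 else 0) = e i := fun i => rfl
  have habs : |(-(U μ / z ^ 2))| = U μ * z ^ (-2 : ℝ) := by
    rw [abs_neg, abs_of_pos (by positivity),
      show (-2 : ℝ) = -((2:ℕ):ℝ) by norm_num, Real.rpow_neg hz0.le,
      Real.rpow_natCast, div_eq_mul_inv]
  have hb : ∀ i, 0 < 1 - (1 - U i / U μ) * z := by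
    intro i
    have h1 : 0 < U i / U μ := div_pos (hU i) hUμ
    nlinarith
  have hfac : ∀ i, g z + U i = U μ * (1 - (1 - U i / U μ) * z) / z := by
    intro i
    simp only [hg]
    field_simp
    ring
  have hgz : g z = U μ * (1 - z) / z := by
    simp only [hg]; field_simp
  have hprod : (∏ i, (g z + U i) ^ e i)
      = U μ ^ (-T - 1) * z ^ (T + 1) *
        ∏ i ∈ Finset.univ.erase μ, (1 - (1 - U i / U μ) * z) ^ e i := by
    have step : ∀ i : Fin n, (g z + U i) ^ e i
        = (U μ ^ e i * z ^ (-(e i))) * (1 - (1 - U i / U μ) * z) ^ e i := by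
      intro i
      rw [hfac i, Real.div_rpow (mul_pos hUμ (hb i)).le hz0.le,
        Real.mul_rpow hUμ.le (hb i).le, Real.rpow_neg hz0.le, div_eq_mul_inv]
      ring
    rw [Finset.prod_congr rfl (fun i _ => step i), Finset.prod_mul_distrib,
      Finset.prod_mul_distrib, ← Real.rpow_sum_of_pos hUμ, ← Real.rpow_sum_of_pos hz0]
    have hse : (∑ i, e i) = -T - 1 := by
      simp only [he, hT]
      rw [Finset.sum_sub_distrib, Finset.sum_neg_distrib]
      congr 1
      rw [Finset.sum_ite_eq' Finset.univ κ (fun _ => (1:ℝ))]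
      simp
    have hse' : (∑ i, -(e i)) = T + 1 := by
      rw [Finset.sum_neg_distrib, hse]; ring
    rw [hse, hse']
    congr 1
    rw [← Finset.prod_erase_mul _ _ (Finset.mem_univ μ)]
    rw [div_self hUμ.ne']
    norm_num
  simp only [key]
  rw [smul_eq_mul, habs, hprod, hgz]
  exact aux_alg (U μ) (1 - z) z _ T c hUμ hz0 hz1'.le
end

section
/- Let α > 2, let n be a positive integer, let U : Fin n → ℝ with U i > 0 for all i, and let τ : Fin n → ℕ. Let μ ∈ Fin n be an index such that U μ = max_{i} U i, and set T = Σ_{i} τ i. Then ∫_{ℝ²} (1 − ∏_{i} (1 + U i · ‖u‖^(−α))^(−τ i)) du = π · Σ_{κ} (τ κ) · (U κ) · (U μ)^(2/α − 1) · ∫_0^1 z^(−2/α) · (1 − z)^(T + 2/α − 1) · ∏_{i ≠ μ} (1 − (1 − (U i)/(U μ)) · z)^(−(τ i) − δ_{iκ}) dz, where the outer sum runs over κ ∈ Fin n, δ_{iκ} equals 1 if i = κ and 0 otherwise, and the left-hand side is a Lebesgue integral over the plane. -/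
open MeasureTheory Real

open Set

theorem one_sub_prod_le {ι : Type*} (t : Finset ι) (a : ι → ℝ) (h0 : ∀ i ∈ t, 0 ≤ a i)
    (h1 : ∀ i ∈ t, a i ≤ 1) : 1 - ∏ i ∈ t, a i ≤ ∑ i ∈ t, (1 - a i) := by
  induction t using Finset.cons_induction with
  | empty => simp
  | cons j t hj ih =>
    rw [Finset.prod_cons, Finset.sum_cons]
    have h0' : ∀ i ∈ t, 0 ≤ a i := fun i hi => h0 i (Finset.mem_cons_of_mem hi)
    have h1' : ∀ i ∈ t, a i ≤ 1 := fun i hi => h1 i (Finset.mem_cons_of_mem hi)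
    have hp0 : 0 ≤ ∏ i ∈ t, a i := Finset.prod_nonneg h0'
    have hp1 : ∏ i ∈ t, a i ≤ 1 := Finset.prod_le_one h0' h1'
    have := ih h0' h1'
    have ha0 := h0 j (Finset.mem_cons_self j t)
    have ha1 := h1 j (Finset.mem_cons_self j t)
    nlinarith

theorem bern (x : ℝ) (hx : 0 ≤ x) (τ : ℕ) : (1 - τ * x) * (1+x) ^ τ ≤ 1 := by
  induction τ with
  | zero => simp
  | succ k ih =>
    have hb : (0:ℝ) < 1 + x := by linarith
    have hp : (0:ℝ) ≤ (1+x) ^ k := by positivity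
    have key : (1 - ((k:ℝ)+1) * x) * (1+x) ≤ 1 - k * x := by
      nlinarith [mul_nonneg (by positivity : (0:ℝ) ≤ (k:ℝ)+1) (sq_nonneg x)]
    calc (1 - (↑(k+1):ℝ) * x) * (1+x) ^ (k+1)
        = ((1 - ((k:ℝ)+1) * x) * (1+x)) * (1+x)^k := by push_cast; ring
      _ ≤ (1 - k*x) * (1+x)^k := by nlinarith
      _ ≤ 1 := ih

theorem bern' (x : ℝ) (hx : 0 ≤ x) (τ : ℕ) : 1 - (1+x) ^ (-(τ:ℤ)) ≤ τ * x := by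
  have hb : (0:ℝ) < 1 + x := by linarith
  have hp : (0:ℝ) < (1+x) ^ τ := by positivity
  rw [zpow_neg, zpow_natCast]
  have h4 : 1 - (τ:ℝ) * x ≤ ((1+x)^τ)⁻¹ := by
    calc 1 - (τ:ℝ)*x = ((1 - (τ:ℝ)*x)*(1+x)^τ)/(1+x)^τ := by field_simp
      _ ≤ 1/(1+x)^τ := by gcongr; exact bern x hx τ
      _ = ((1+x)^τ)⁻¹ := one_div _
  linarith

theorem integrableOn_aux {p q C1 C2 : ℝ} (hp : -1 < p) (hq : q < -1) {f : ℝ → ℝ}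
    (hc : ContinuousOn f (Ioi 0)) (h0 : ∀ s, 0 < s → s ≤ 1 → |f s| ≤ C1 * s ^ p)
    (hi : ∀ s, 1 < s → |f s| ≤ C2 * s ^ q) : IntegrableOn f (Ioi (0:ℝ)) := by
  rw [← Ioc_union_Ioi_eq_Ioi (by norm_num : (0:ℝ) ≤ 1)]
  apply IntegrableOn.union
  · have hg : IntegrableOn (fun s => C1 * s ^ p) (Ioc (0:ℝ) 1) := by
      apply Integrable.const_mul
      have h := intervalIntegral.intervalIntegrable_rpow' hp (a:=(0:ℝ)) (b:=1)
      rwa [intervalIntegrable_iff_integrableOn_Ioc_of_le (by norm_num : (0:ℝ) ≤ 1)] at h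
    refine Integrable.mono' hg ((hc.mono ?_).aestronglyMeasurable measurableSet_Ioc) ?_
    · exact fun x hx => hx.1
    · filter_upwards [ae_restrict_mem measurableSet_Ioc] with s hs
      exact h0 s hs.1 hs.2
  · have hg : IntegrableOn (fun s => C2 * s ^ q) (Ioi (1:ℝ)) :=
      (integrableOn_Ioi_rpow_of_lt hq one_pos).const_mul C2
    refine Integrable.mono' hg ((hc.mono ?_).aestronglyMeasurable measurableSet_Ioi) ?_
    · exact fun x hx => mem_Ioi.2 (lt_trans one_pos (mem_Ioi.1 hx))
    · filter_upwards [ae_restrict_mem measurableSet_Ioi] with s hs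
      exact hi s hs

noncomputable section StmtAux

variable {n : ℕ} (U : Fin n → ℝ) (τ : Fin n → ℕ)

def Pf (s : ℝ) : ℝ := ∏ i, (1 + U i * s) ^ (-(τ i : ℤ))

def Rf (κ : Fin n) (s : ℝ) : ℝ :=
  ∏ i, (1 + U i * s) ^ (-(τ i : ℤ) - if i = κ then 1 else 0)

lemma Rf_eq (κ : Fin n) (s : ℝ) :
    Rf U τ κ s = (1 + U κ * s) ^ (-(τ κ : ℤ) - 1) *
      ∏ j ∈ Finset.univ.erase κ, (1 + U j * s) ^ (-(τ j : ℤ)) := by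
  rw [Rf, ← Finset.mul_prod_erase _ _ (Finset.mem_univ κ), if_pos rfl]
  congr 1
  refine Finset.prod_congr rfl fun j hj => ?_
  rw [if_neg (Finset.mem_erase.mp hj).1, sub_zero]

variable (hU : ∀ i, 0 < U i)
include hU

lemma base_pos {s : ℝ} (hs : 0 ≤ s) (i : Fin n) : 0 < 1 + U i * s := by
  have := (hU i).le; nlinarith

lemma base_one_le {s : ℝ} (hs : 0 ≤ s) (i : Fin n) : 1 ≤ 1 + U i * s := by
  have := (hU i).le; nlinarith

lemma Pf_pos {s : ℝ} (hs : 0 ≤ s) : 0 < Pf U τ s :=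
  Finset.prod_pos fun i _ => zpow_pos (base_pos U hU hs i) _

lemma Pf_le_one {s : ℝ} (hs : 0 ≤ s) : Pf U τ s ≤ 1 := by
  apply Finset.prod_le_one (fun i _ => (zpow_pos (base_pos U hU hs i) _).le)
  intro i _
  exact zpow_le_one_of_nonpos₀ (base_one_le U hU hs i) (by simp)

lemma Rf_pos {s : ℝ} (hs : 0 ≤ s) (κ : Fin n) : 0 < Rf U τ κ s :=
  Finset.prod_pos fun i _ => zpow_pos (base_pos U hU hs i) _

lemma Rf_le_one {s : ℝ} (hs : 0 ≤ s) (κ : Fin n) : Rf U τ κ s ≤ 1 := by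
  apply Finset.prod_le_one (fun i _ => (zpow_pos (base_pos U hU hs i) _).le)
  intro i _
  refine zpow_le_one_of_nonpos₀ (base_one_le U hU hs i) ?_
  have : (0:ℤ) ≤ (τ i : ℤ) := by positivity
  split <;> omega

lemma Rf_le_inv {s : ℝ} (hs : 0 ≤ s) (κ : Fin n) :
    Rf U τ κ s ≤ (1 + U κ * s)⁻¹ := by
  rw [Rf_eq]
  have h1 : (1 + U κ * s) ^ (-(τ κ : ℤ) - 1) ≤ (1 + U κ * s) ^ (-1 : ℤ) := by
    apply zpow_le_zpow_right₀ (base_one_le U hU hs κ)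
    have : (0:ℤ) ≤ (τ κ : ℤ) := by positivity
    omega
  have h2 : ∏ j ∈ Finset.univ.erase κ, (1 + U j * s) ^ (-(τ j : ℤ)) ≤ 1 := by
    apply Finset.prod_le_one (fun i _ => (zpow_pos (base_pos U hU hs i) _).le)
    exact fun i _ => zpow_le_one_of_nonpos₀ (base_one_le U hU hs i) (by simp)
  have h3 : (0:ℝ) < ∏ j ∈ Finset.univ.erase κ, (1 + U j * s) ^ (-(τ j : ℤ)) :=
    Finset.prod_pos fun i _ => zpow_pos (base_pos U hU hs i) _
  calc (1 + U κ * s) ^ (-(τ κ : ℤ) - 1) * ∏ j ∈ Finset.univ.erase κ, (1 + U j * s) ^ (-(τ j:ℤ))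
      ≤ (1 + U κ * s) ^ (-1:ℤ) * 1 := by
        apply mul_le_mul h1 h2 h3.le (zpow_pos (base_pos U hU hs κ) _).le
    _ = (1 + U κ * s)⁻¹ := by rw [mul_one, zpow_neg_one]

lemma one_sub_Pf_le {s : ℝ} (hs : 0 ≤ s) :
    1 - Pf U τ s ≤ (∑ i, (τ i : ℝ) * U i) * s := by
  have h := one_sub_prod_le Finset.univ (fun i => (1 + U i * s) ^ (-(τ i : ℤ)))
    (fun i _ => (zpow_pos (base_pos U hU hs i) _).le)
    (fun i _ => zpow_le_one_of_nonpos₀ (base_one_le U hU hs i) (by simp))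
  refine h.trans ?_
  rw [Finset.sum_mul]
  refine Finset.sum_le_sum fun i _ => ?_
  have := bern' (U i * s) (mul_nonneg (hU i).le hs) (τ i)
  calc 1 - (1 + U i * s) ^ (-(τ i:ℤ)) ≤ (τ i : ℝ) * (U i * s) := this
    _ = (τ i:ℝ) * U i * s := by ring

lemma hasDerivAt_Pf {s : ℝ} (hs : 0 ≤ s) :
    HasDerivAt (Pf U τ) (-(∑ κ, (τ κ : ℝ) * U κ * Rf U τ κ s)) s := by
  have hb : ∀ i : Fin n, (1 + U i * s) ≠ 0 := fun i => (base_pos U hU hs i).ne'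
  have hg : ∀ i ∈ Finset.univ, HasDerivAt (fun t => (1 + U i * t) ^ (-(τ i:ℤ)))
      (((↑(-(τ i:ℤ)) : ℝ) * (1 + U i * s) ^ (-(τ i:ℤ) - 1)) * U i) s := by
    intro i _
    have h1 : HasDerivAt (fun t : ℝ => 1 + U i * t) (U i) s := by
      simpa using ((hasDerivAt_id s).const_mul (U i)).const_add 1
    exact (hasDerivAt_zpow (-(τ i:ℤ)) (1 + U i * s) (Or.inl (hb i))).comp s h1
  have H := HasDerivAt.finset_prod hg
  have heq : (∑ κ ∈ Finset.univ, (∏ j ∈ Finset.univ.erase κ, (1 + U j * s) ^ (-(τ j:ℤ))) •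
      (((↑(-(τ κ:ℤ)) : ℝ) * (1 + U κ * s) ^ (-(τ κ:ℤ) - 1)) * U κ)) =
      -(∑ κ, (τ κ : ℝ) * U κ * Rf U τ κ s) := by
    rw [← Finset.sum_neg_distrib]
    refine Finset.sum_congr rfl fun κ _ => ?_
    rw [Rf_eq, smul_eq_mul]
    push_cast
    ring
  rw [heq] at H
  refine H.congr_of_eventuallyEq (Filter.Eventually.of_forall fun t => ?_)
  simp [Pf, Finset.prod_apply]


variable {α : ℝ} (hα : 2 < α)
include hα

omit hU in
lemma neg_two_div_lt : (-1:ℝ) < -2/α := by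
  have hα0 : (0:ℝ) < α := by linarith
  rw [neg_lt, neg_div, neg_neg, div_lt_one hα0]; linarith

omit hα in
lemma contOn_Rf (κ : Fin n) : ContinuousOn (Rf U τ κ) (Ioi (0:ℝ)) := by
  apply continuousOn_finset_prod
  intro i _
  refine ContinuousOn.zpow₀ ?_ _ ?_
  · exact (continuous_const.add (continuous_const.mul continuous_id)).continuousOn
  · exact fun a ha => Or.inl (base_pos U hU (le_of_lt ha) i).ne'

omit hα in
lemma contOn_Pf : ContinuousOn (Pf U τ) (Ioi (0:ℝ)) := by
  apply continuousOn_finset_prod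
  intro i _
  refine ContinuousOn.zpow₀ ?_ _ ?_
  · exact (continuous_const.add (continuous_const.mul continuous_id)).continuousOn
  · exact fun a ha => Or.inl (base_pos U hU (le_of_lt ha) i).ne'

omit hU hα in
lemma contOn_rpow (c : ℝ) : ContinuousOn (fun s : ℝ => s ^ c) (Ioi (0:ℝ)) :=
  fun s hs => (Real.continuousAt_rpow_const s c (Or.inl (ne_of_gt hs))).continuousWithinAt

lemma int_h1 : IntegrableOn (fun s => s ^ (-2/α - 1) * (1 - Pf U τ s)) (Ioi (0:ℝ)) := by
  refine integrableOn_aux (C1 := ∑ i, (τ i : ℝ) * U i) (C2 := 1)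
    (neg_two_div_lt hα) (by nlinarith [div_neg_of_neg_of_pos (show (-2:ℝ)<0 by norm_num) (show (0:ℝ)<α by linarith)] : -2/α - 1 < -1)
    ((contOn_rpow _).mul (continuousOn_const.sub (contOn_Pf U τ hU))) ?_ ?_
  · intro s hs hs1
    have hf0 : 0 ≤ s ^ (-2/α - 1) * (1 - Pf U τ s) :=
      mul_nonneg (rpow_nonneg hs.le _) (sub_nonneg.2 (Pf_le_one U τ hU hs.le))
    rw [abs_of_nonneg hf0]
    calc s ^ (-2/α - 1) * (1 - Pf U τ s)
        ≤ s ^ (-2/α - 1) * ((∑ i, (τ i : ℝ) * U i) * s) := by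
          gcongr
          · exact one_sub_Pf_le U τ hU hs.le
      _ = (∑ i, (τ i : ℝ) * U i) * (s ^ (-2/α - 1) * s ^ (1:ℝ)) := by rw [rpow_one]; ring
      _ = (∑ i, (τ i : ℝ) * U i) * s ^ (-2/α) := by
          rw [← Real.rpow_add hs, show -2/α - 1 + 1 = -2/α by ring]
  · intro s hs
    have hs0 : (0:ℝ) < s := lt_trans one_pos hs
    have hf0 : 0 ≤ s ^ (-2/α - 1) * (1 - Pf U τ s) :=
      mul_nonneg (rpow_nonneg hs0.le _) (sub_nonneg.2 (Pf_le_one U τ hU hs0.le))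
    rw [abs_of_nonneg hf0, one_mul]
    calc s ^ (-2/α - 1) * (1 - Pf U τ s) ≤ s ^ (-2/α - 1) * 1 := by
          gcongr
          · linarith [Pf_pos U τ hU hs0.le]
      _ = s ^ (-2/α - 1) := mul_one _

lemma int_h2 (κ : Fin n) : IntegrableOn (fun s => s ^ (-2/α) * Rf U τ κ s) (Ioi (0:ℝ)) := by
  refine integrableOn_aux (C1 := 1) (C2 := (U κ)⁻¹)
    (neg_two_div_lt hα) (by nlinarith [div_neg_of_neg_of_pos (show (-2:ℝ)<0 by norm_num) (show (0:ℝ)<α by linarith)] : -2/α - 1 < -1)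
    ((contOn_rpow _).mul (contOn_Rf U τ hU κ)) ?_ ?_
  · intro s hs hs1
    have hf0 : 0 ≤ s ^ (-2/α) * Rf U τ κ s :=
      mul_nonneg (rpow_nonneg hs.le _) (Rf_pos U τ hU hs.le κ).le
    rw [abs_of_nonneg hf0, one_mul]
    calc s ^ (-2/α) * Rf U τ κ s ≤ s ^ (-2/α) * 1 := by
          gcongr
          · exact Rf_le_one U τ hU hs.le κ
      _ = s ^ (-2/α) := mul_one _
  · intro s hs
    have hs0 : (0:ℝ) < s := lt_trans one_pos hs
    have hf0 : 0 ≤ s ^ (-2/α) * Rf U τ κ s :=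
      mul_nonneg (rpow_nonneg hs0.le _) (Rf_pos U τ hU hs0.le κ).le
    rw [abs_of_nonneg hf0]
    have hR : Rf U τ κ s ≤ (U κ * s)⁻¹ := by
      refine (Rf_le_inv U τ hU hs0.le κ).trans ?_
      apply inv_anti₀ (mul_pos (hU κ) hs0)
      linarith
    calc s ^ (-2/α) * Rf U τ κ s ≤ s ^ (-2/α) * (U κ * s)⁻¹ := by
          gcongr
      _ = (U κ)⁻¹ * (s ^ (-2/α) * s ^ (-1:ℝ)) := by
          rw [mul_inv, Real.rpow_neg_one]; ring
      _ = (U κ)⁻¹ * s ^ (-2/α - 1) := by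
          rw [← Real.rpow_add hs0, show -2/α + -1 = -2/α - 1 by ring]

lemma ftc_step :
    ∫ s in Ioi (0:ℝ), s ^ (-2/α - 1) * (1 - Pf U τ s) =
      (α/2) * ∑ κ, (τ κ : ℝ) * U κ * ∫ s in Ioi (0:ℝ), s ^ (-2/α) * Rf U τ κ s := by
  have hα0 : (0:ℝ) < α := by linarith
  set F : ℝ → ℝ := fun s => -(α/2) * (s ^ (-2/α) * (1 - Pf U τ s)) with hF
  set G : ℝ → ℝ := fun s => s ^ (-2/α - 1) * (1 - Pf U τ s)
      - (α/2) * ∑ κ, (τ κ : ℝ) * U κ * (s ^ (-2/α) * Rf U τ κ s) with hG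
  have hPf0 : Pf U τ 0 = 1 := by simp [Pf]
  have hF0 : F 0 = 0 := by simp [hF, hPf0]
  have hexp : (0:ℝ) < 1 - 2/α := by
    rw [sub_pos, div_lt_one hα0]; linarith
  have hCnn : (0:ℝ) ≤ ∑ i, (τ i:ℝ) * U i :=
    Finset.sum_nonneg fun i _ => mul_nonneg (Nat.cast_nonneg _) (hU i).le
  have hderiv : ∀ s ∈ Ioi (0:ℝ), HasDerivAt F (G s) s := by
    intro s hs
    have hs0 : (0:ℝ) < s := hs
    have h1 : HasDerivAt (fun t : ℝ => t ^ (-2/α)) ((-2/α) * s ^ (-2/α - 1)) s :=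
      Real.hasDerivAt_rpow_const (Or.inl hs0.ne')
    have h3 : HasDerivAt (fun t : ℝ => 1 - Pf U τ t) (∑ κ, (τ κ:ℝ)*U κ*Rf U τ κ s) s := by
      simpa using (hasDerivAt_Pf U τ hU hs0.le).const_sub 1
    have h4 := (h1.mul h3).const_mul (-(α/2))
    have hsum : ∑ κ, (τ κ:ℝ)*U κ*(s^(-2/α)*Rf U τ κ s)
        = s^(-2/α) * ∑ κ, (τ κ:ℝ)*U κ*Rf U τ κ s := by
      rw [Finset.mul_sum]
      exact Finset.sum_congr rfl fun κ _ => by ring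
    have hGs : G s = -(α/2) * ((-2/α) * s ^ (-2/α-1) * (1 - Pf U τ s)
        + s ^ (-2/α) * ∑ κ, (τ κ:ℝ)*U κ*Rf U τ κ s) := by
      rw [hG]
      simp only
      rw [hsum]
      field_simp
      ring
    rw [hGs]
    refine h4.congr_of_eventuallyEq (Filter.Eventually.of_forall fun y => ?_)
    rfl
  have hint2 : ∀ κ : Fin n, IntegrableOn
      (fun s => (τ κ:ℝ) * U κ * (s ^ (-2/α) * Rf U τ κ s)) (Ioi (0:ℝ)) :=
    fun κ => (int_h2 U τ hU hα κ).const_mul _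
  have hintsum : IntegrableOn
      (fun s => ∑ κ, (τ κ:ℝ) * U κ * (s ^ (-2/α) * Rf U τ κ s)) (Ioi (0:ℝ)) :=
    integrable_finset_sum _ fun κ _ => hint2 κ
  have hGint : IntegrableOn G (Ioi (0:ℝ)) := by
    apply Integrable.sub (int_h1 U τ hU hα)
    exact hintsum.const_mul _
  have hcont : ContinuousWithinAt F (Ici 0) 0 := by
    rw [ContinuousWithinAt, hF0]
    apply squeeze_zero_norm' (a := fun s => (α/2) * (∑ i, (τ i:ℝ) * U i) * s ^ (1-2/α))
    · filter_upwards [self_mem_nhdsWithin] with s hs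
      rcases eq_or_lt_of_le (mem_Ici.mp hs) with h|h
      · rw [← h, hF0, norm_zero]
        positivity
      · have h1 : 0 ≤ 1 - Pf U τ s := sub_nonneg.2 (Pf_le_one U τ hU h.le)
        have h2 : 0 ≤ s ^ (-2/α) := rpow_nonneg h.le _
        rw [hF, Real.norm_eq_abs, abs_mul, abs_mul, abs_of_nonneg h2, abs_of_nonneg h1]
        have : |(-(α/2))| = α/2 := by rw [abs_neg, abs_of_pos (by linarith)]
        rw [this]
        calc α/2 * (s ^ (-2/α) * (1 - Pf U τ s))
            ≤ α/2 * (s ^ (-2/α) * ((∑ i, (τ i:ℝ) * U i) * s)) := by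
              gcongr
              exact one_sub_Pf_le U τ hU h.le
          _ = α/2 * (∑ i, (τ i:ℝ) * U i) * (s ^ (-2/α) * s ^ (1:ℝ)) := by
              rw [rpow_one]; ring
          _ = α/2 * (∑ i, (τ i:ℝ) * U i) * s ^ (1-2/α) := by
              rw [← Real.rpow_add h, show -2/α + 1 = 1-2/α by ring]
    · have hc : ContinuousWithinAt (fun s : ℝ => s ^ (1-2/α)) (Ici 0) 0 :=
        (Real.continuousAt_rpow_const 0 _ (Or.inr hexp.le)).continuousWithinAt
      rw [ContinuousWithinAt, zero_rpow hexp.ne'] at hc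
      simpa using hc.const_mul (α/2 * (∑ i, (τ i:ℝ) * U i))
  have hftop : Filter.Tendsto F Filter.atTop (nhds 0) := by
    apply squeeze_zero_norm' (a := fun s => (α/2) * s ^ (-(2/α)))
    · filter_upwards [Filter.eventually_gt_atTop (0:ℝ)] with s hs
      have h1 : 0 ≤ 1 - Pf U τ s := sub_nonneg.2 (Pf_le_one U τ hU hs.le)
      have h2 : 0 ≤ s ^ (-2/α) := rpow_nonneg hs.le _
      rw [hF, Real.norm_eq_abs, abs_mul, abs_mul, abs_of_nonneg h2, abs_of_nonneg h1,
        abs_neg, abs_of_pos (by linarith : (0:ℝ) < α/2)]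
      have h3 : 1 - Pf U τ s ≤ 1 := by linarith [Pf_pos U τ hU hs.le]
      calc α/2 * (s ^ (-2/α) * (1 - Pf U τ s)) ≤ α/2 * (s ^ (-2/α) * 1) := by gcongr
        _ = α/2 * s ^ (-(2/α)) := by rw [mul_one, neg_div]
    · have := tendsto_rpow_neg_atTop (by positivity : (0:ℝ) < 2/α)
      simpa using this.const_mul (α/2)
  have key := integral_Ioi_of_hasDerivAt_of_tendsto hcont hderiv hGint hftop
  rw [hF0, sub_zero] at key
  have split : ∫ s in Ioi (0:ℝ), G s =
      (∫ s in Ioi (0:ℝ), s ^ (-2/α-1) * (1 - Pf U τ s))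
      - (α/2) * ∑ κ, (τ κ:ℝ)*U κ * ∫ s in Ioi (0:ℝ), s^(-2/α)*Rf U τ κ s := by
    rw [hG]
    rw [integral_sub (int_h1 U τ hU hα) (hintsum.const_mul _)]
    congr 1
    rw [integral_const_mul, integral_finset_sum _ (fun κ _ => hint2 κ)]
    congr 1
    exact Finset.sum_congr rfl fun κ _ => by rw [integral_const_mul]
  rw [split] at key
  linarith [key]

-- pointwise algebra lemma
lemma pointwise_alg (μ κ : Fin n) (hμ : ∀ i, U i ≤ U μ)
    (z : ℝ) (hz0 : 0 < z) (hz1 : z < 1) :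
    |(U μ * (1-z)^2)⁻¹| * ((z / (U μ * (1-z))) ^ (-2/α) * Rf U τ κ (z / (U μ * (1-z)))) =
    U μ ^ (2 / α - 1) *
      (z ^ (-(2 / α)) * (1 - z) ^ ((∑ i, (τ i : ℝ)) + 2 / α - 1) *
        ∏ i ∈ Finset.univ.erase μ,
          (1 - (1 - U i / U μ) * z) ^ (-(τ i : ℝ) - if i = κ then 1 else 0)) := by
  have hα0 : (0:ℝ) < α := by linarith
  have hc : 0 < U μ := hU μ
  set c := U μ with hcdef
  set w := 1 - z with hwdef
  have hw : 0 < w := by simp [hwdef]; linarith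
  have hcw : 0 < c * w := mul_pos hc hw
  set er : Fin n → ℝ := fun i => -(τ i : ℝ) - if i = κ then 1 else 0 with herdef
  set A : Fin n → ℝ := fun i => c * w + U i * z with hAdef
  have hA : ∀ i, 0 < A i := fun i => by
    have := hU i; simp only [hAdef]; positivity
  have hAμ : A μ = c := by simp only [hAdef, hwdef]; ring
  set X := ∏ i ∈ Finset.univ.erase μ, A i ^ (er i) with hXdef
  have hXpos : 0 < X := Finset.prod_pos fun i _ => rpow_pos_of_pos (hA i) _
  set Tr := ∑ i, (τ i : ℝ) with hTrdef
  have hTr : 0 ≤ Tr := Finset.sum_nonneg fun i _ => Nat.cast_nonneg _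
  have hsum_er : ∑ i, er i = -Tr - 1 := by
    simp only [herdef, Finset.sum_sub_distrib, hTrdef, Finset.sum_neg_distrib]
    congr 1
    rw [Finset.sum_ite_eq' Finset.univ κ (fun _ => (1:ℝ))]
    simp
  -- step B: Rf at φ z
  have hB : Rf U τ κ (z / (c * w)) = ∏ i, (A i / (c*w)) ^ (-(τ i:ℤ) - if i = κ then 1 else 0) := by
    refine Finset.prod_congr rfl fun i _ => ?_
    congr 1
    field_simp [hAdef]
    rfl
  -- step C/D: convert to rpow and split
  have hCD : ∀ i, (A i / (c*w)) ^ (-(τ i:ℤ) - if i = κ then 1 else 0)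
      = A i ^ (er i) * (c*w) ^ (-(er i)) := by
    intro i
    have h1 : ((((-(τ i:ℤ) - if i = κ then 1 else 0) : ℤ)):ℝ) = er i := by
      simp only [herdef]; split_ifs <;> push_cast <;> ring
    rw [← Real.rpow_intCast (A i / (c*w)) _, h1, Real.div_rpow (hA i).le hcw.le,
      Real.rpow_neg hcw.le, div_eq_mul_inv]
  have hprod : ∏ i, (A i / (c*w)) ^ (-(τ i:ℤ) - if i = κ then 1 else 0)
      = (c ^ (er μ) * X) * (c*w) ^ (Tr + 1) := by
    rw [Finset.prod_congr rfl (fun i _ => hCD i), Finset.prod_mul_distrib]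
    congr 1
    · rw [← Finset.mul_prod_erase _ _ (Finset.mem_univ μ), hAμ, hXdef]
    · rw [← Real.rpow_sum_of_pos hcw]
      congr 1
      rw [Finset.sum_neg_distrib, hsum_er]
      ring
  -- step G
  have hG : (z / (c*w)) ^ (-2/α) = z ^ (-(2/α)) * (c*w) ^ (2/α) := by
    rw [Real.div_rpow hz0.le hcw.le, neg_div, Real.rpow_neg hz0.le, Real.rpow_neg hcw.le]
    field_simp
  -- RHS product
  have hR : ∀ i ∈ Finset.univ.erase μ, (1 - (1 - U i / c) * z) ^ (-(τ i : ℝ) - if i = κ then 1 else 0)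
      = A i ^ (er i) * c ^ (-(er i)) := by
    intro i _
    have h2 : 1 - (1 - U i / c) * z = A i / c := by
      field_simp [hAdef, hwdef]; ring
    rw [h2, Real.div_rpow (hA i).le hc.le, Real.rpow_neg hc.le, div_eq_mul_inv]
  have hRHSprod : ∏ i ∈ Finset.univ.erase μ,
      (1 - (1 - U i / c) * z) ^ (-(τ i : ℝ) - if i = κ then 1 else 0)
      = X * c ^ (Tr + 1 + er μ) := by
    rw [Finset.prod_congr rfl hR, Finset.prod_mul_distrib, hXdef]
    congr 1
    rw [← Real.rpow_sum_of_pos hc]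
    congr 1
    have : ∑ i ∈ Finset.univ.erase μ, er i = (∑ i, er i) - er μ := by
      rw [← Finset.sum_erase_add _ _ (Finset.mem_univ μ)]; ring
    rw [Finset.sum_neg_distrib, this, hsum_er]
    ring
  -- assemble
  rw [hB, hprod, hG, hRHSprod]
  have habs : |(c * w^2)⁻¹| = c ^ (-1:ℝ) * w ^ (-2:ℝ) := by
    rw [abs_of_pos (by positivity), mul_inv, Real.rpow_neg_one]
    congr 1
    rw [← Real.rpow_natCast w 2, ← Real.rpow_neg hw.le]
    norm_num
  rw [habs]
  rw [Real.mul_rpow hc.le hw.le, Real.mul_rpow hc.le hw.le]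
  -- now everything is rpow atoms; merge exponents
  rw [show (c ^ (2/α-1)) = c ^ (2/α) * c ^ (-1:ℝ) by rw [← Real.rpow_add hc]; ring_nf]
  rw [show w ^ (Tr + 2/α - 1) = w ^ (-2:ℝ) * w ^ (2/α) * w ^ (Tr+1) by
    rw [← Real.rpow_add hw, ← Real.rpow_add hw]; ring_nf]
  rw [show c ^ (Tr + 1 + er μ) = c ^ (Tr+1) * c ^ (er μ) by rw [← Real.rpow_add hc]]
  ring

lemma subst_step (μ : Fin n) (hμ : ∀ i, U i ≤ U μ) (κ : Fin n) :
    ∫ s in Ioi (0:ℝ), s ^ (-2/α) * Rf U τ κ s =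
      U μ ^ (2 / α - 1) * ∫ z in Ioo (0:ℝ) 1,
        z ^ (-(2 / α)) * (1 - z) ^ ((∑ i, (τ i : ℝ)) + 2 / α - 1) *
          ∏ i ∈ Finset.univ.erase μ,
            (1 - (1 - U i / U μ) * z) ^ (-(τ i : ℝ) - if i = κ then 1 else 0) := by
  have hc : 0 < U μ := hU μ
  set φ : ℝ → ℝ := fun z => z / (U μ * (1 - z)) with hφ
  have himg : φ '' (Ioo 0 1) = Ioi (0:ℝ) := by
    ext s
    simp only [mem_image, mem_Ioo, mem_Ioi]
    constructor
    · rintro ⟨z, ⟨hz0, hz1⟩, rfl⟩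
      have h1 : 0 < U μ * (1 - z) := by nlinarith
      exact div_pos hz0 h1
    · intro hs
      have h1 : (0:ℝ) < 1 + U μ * s := by nlinarith
      refine ⟨U μ * s / (1 + U μ * s), ⟨by positivity, ?_⟩, ?_⟩
      · rw [div_lt_one h1]; nlinarith
      · simp only [hφ]
        have h2 : 1 - U μ * s / (1 + U μ * s) = 1 / (1 + U μ * s) := by
          field_simp
          ring
        rw [h2]
        rw [div_eq_iff (by positivity : U μ * (1 / (1 + U μ * s)) ≠ 0)]
        field_simp
  have hderiv : ∀ z ∈ Ioo (0:ℝ) 1, HasDerivWithinAt φ ((U μ * (1-z)^2)⁻¹) (Ioo 0 1) z := by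
    intro z hz
    obtain ⟨hz0, hz1⟩ := hz
    have h1z : (0:ℝ) < 1 - z := by linarith
    have hden : U μ * (1 - z) ≠ 0 := by positivity
    have hg : HasDerivAt (fun t : ℝ => U μ * (1 - t)) (U μ * (-1)) z := by
      simpa using ((hasDerivAt_id z).const_sub 1).const_mul (U μ)
    have hq := (hasDerivAt_id z).div hg hden
    simp only [id_eq] at hq
    have heq : (1 * (U μ * (1 - z)) - z * (U μ * (-1))) / (U μ * (1 - z))^2
        = (U μ * (1-z)^2)⁻¹ := by
      field_simp
      ring
    rw [heq] at hq
    exact hq.hasDerivWithinAt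
  have hinj : InjOn φ (Ioo 0 1) := by
    intro x hx y hy h
    obtain ⟨hx0, hx1⟩ := hx
    obtain ⟨hy0, hy1⟩ := hy
    simp only [hφ] at h
    rw [div_eq_div_iff (by nlinarith) (by nlinarith)] at h
    have h2 : U μ * x = U μ * y := by linear_combination h
    exact mul_left_cancel₀ hc.ne' h2
  have hJ := integral_image_eq_integral_abs_deriv_smul measurableSet_Ioo hderiv hinj
      (fun s => s ^ (-2/α) * Rf U τ κ s)
  rw [himg] at hJ
  rw [hJ, ← integral_const_mul]
  refine setIntegral_congr_fun measurableSet_Ioo fun z hz => ?_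
  obtain ⟨hz0, hz1⟩ := hz
  have := pointwise_alg U τ hU hα μ κ hμ z hz0 hz1
  simp only [hφ, smul_eq_mul]
  rw [this]

end StmtAux

theorem radial_step' {α : ℝ} (hα : 2 < α) (P : ℝ → ℝ) :
    ∫ r in Ioi (0:ℝ), r * (1 - P (r ^ (-α))) =
      (1/α) * ∫ s in Ioi (0:ℝ), s ^ (-2/α - 1) * (1 - P s) := by
  have hα0 : (0:ℝ) < α := by linarith
  have hne : -α ≠ 0 := by simp [hα0.ne']
  have h := integral_comp_rpow_Ioi (fun y => y ^ (-2/α-1) * (1 - P y)) hne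
  rw [← h, ← integral_const_mul]
  refine setIntegral_congr_fun measurableSet_Ioi fun x hx => ?_
  have hx : (0:ℝ) < x := hx
  simp only [smul_eq_mul, abs_neg, abs_of_pos hα0]
  rw [← Real.rpow_mul hx.le]
  have h2 : (-α) * (-2/α - 1) = 2 + α := by field_simp; ring
  rw [h2]
  have h3 : x ^ (-α - 1) * x ^ (2 + α) = x := by
    rw [← Real.rpow_add hx, show -α-1+(2+α) = (1:ℝ) by ring, rpow_one]
  calc x * (1 - P (x ^ (-α))) = (1/α) * (α * (x ^ (-α-1) * x^(2+α)) * (1 - P (x ^ (-α)))) := by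
        rw [h3]; field_simp
    _ = 1/α * (α * x ^ (-α-1) * (x ^ (2+α) * (1 - P (x ^ (-α))))) := by ring

theorem polar (f : ℝ → ℝ) :
    ∫ u : EuclideanSpace ℝ (Fin 2), f ‖u‖ = 2 * π * ∫ y in Ioi (0:ℝ), y * f y := by
  have h := MeasureTheory.integral_fun_norm_addHaar (volume : Measure (EuclideanSpace ℝ (Fin 2))) f
  rw [finrank_euclideanSpace_fin] at h
  rw [h, measureReal_def, EuclideanSpace.volume_ball]
  have h2 : Real.Gamma ((Fintype.card (Fin 2):ℝ) / 2 + 1) = 1 := by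
    norm_num [Real.Gamma_two]
  rw [h2]
  simp only [Fintype.card_fin, smul_eq_mul, nsmul_eq_mul]
  norm_num
  rw [sq_sqrt pi_nonneg]
  ring

theorem stmt_4 (α : ℝ) (hα : 2 < α) (n : ℕ) (hn : 0 < n)
    (U : Fin n → ℝ) (hU : ∀ i, 0 < U i) (τ : Fin n → ℕ)
    (μ : Fin n) (hμ : ∀ i, U i ≤ U μ) :
    (∫ u : EuclideanSpace ℝ (Fin 2),
        (1 - ∏ i, (1 + U i * ‖u‖ ^ (-α)) ^ (-(τ i : ℝ)))) =
      π * ∑ κ : Fin n, (τ κ : ℝ) * U κ * U μ ^ (2 / α - 1) *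
        ∫ z in Set.Ioo (0 : ℝ) 1,
          z ^ (-(2 / α)) * (1 - z) ^ ((∑ i, (τ i : ℝ)) + 2 / α - 1) *
            ∏ i ∈ Finset.univ.erase μ,
              (1 - (1 - U i / U μ) * z) ^
                (-(τ i : ℝ) - if i = κ then 1 else 0) := by
  have hα0 : (0:ℝ) < α := by linarith
  have key : (∫ u : EuclideanSpace ℝ (Fin 2),
      (1 - ∏ i, (1 + U i * ‖u‖ ^ (-α)) ^ (-(τ i : ℝ)))) =
      ∫ u : EuclideanSpace ℝ (Fin 2), (fun r : ℝ => 1 - Pf U τ (r ^ (-α))) ‖u‖ := by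
    refine integral_congr_ae (Filter.Eventually.of_forall fun u => ?_)
    simp only [Pf]
    congr 1
    refine Finset.prod_congr rfl fun i _ => ?_
    rw [← Real.rpow_intCast (1 + U i * ‖u‖ ^ (-α)) (-(τ i:ℤ))]
    norm_num
  rw [key, polar (fun r : ℝ => 1 - Pf U τ (r ^ (-α)))]
  beta_reduce
  rw [radial_step' hα (Pf U τ), ftc_step U τ hU hα]
  have hsub : ∀ κ : Fin n, (τ κ : ℝ) * U κ * ∫ s in Ioi (0:ℝ), s ^ (-2/α) * Rf U τ κ s
      = (τ κ : ℝ) * U κ * U μ ^ (2 / α - 1) *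
        ∫ z in Ioo (0:ℝ) 1,
          z ^ (-(2 / α)) * (1 - z) ^ ((∑ i, (τ i : ℝ)) + 2 / α - 1) *
            ∏ i ∈ Finset.univ.erase μ,
              (1 - (1 - U i / U μ) * z) ^ (-(τ i : ℝ) - if i = κ then 1 else 0) := by
    intro κ
    rw [subst_step U τ hU hα μ hμ κ]
    ring
  rw [Finset.sum_congr rfl fun κ _ => hsub κ]
  rw [show ∀ S : ℝ, 2 * π * (1 / α * (α / 2 * S)) = π * S from fun S => by
    rw [show 1 / α * (α / 2 * S) = (α⁻¹ * α) * S / 2 by ring, inv_mul_cancel₀ hα0.ne']; ring]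
end

section
/- Let α > 2, let U > 0 be a real number, and let τ be a positive integer. Then ∫_{ℝ²} (1 − (1 + U · ‖u‖^(−α))^(−τ)) du = π · τ · U^(2/α) · B(1 − 2/α, τ + 2/α), where B(a, b) = Γ(a)Γ(b)/Γ(a + b) is the Beta function and the left-hand side is a Lebesgue integral over the plane. -/
open MeasureTheory Real Set

lemma meas_beta (a c : ℝ) : Measurable (fun t : ℝ => t ^ a * (1 + t) ^ c) := by fun_prop

lemma integrableOn_rpow_Ioc {r : ℝ} (h : -1 < r) :
    IntegrableOn (fun t : ℝ => t ^ r) (Ioc (0:ℝ) 1) := by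
  simpa using
    (intervalIntegrable_iff_integrableOn_Ioc_of_le
      (by norm_num : (0:ℝ) ≤ 1)).mp (intervalIntegral.intervalIntegrable_rpow' h)

lemma integrableOn_beta_aux {a b : ℝ} (ha : 0 < a) (hb : 0 < b) :
    IntegrableOn (fun t : ℝ => t ^ (a - 1) * (1 + t) ^ (-(a + b))) (Ioi 0) := by
  have h1 : IntegrableOn (fun t : ℝ => t ^ (a - 1) * (1 + t) ^ (-(a + b))) (Ioc 0 1) := by
    refine Integrable.mono (integrableOn_rpow_Ioc (by linarith : (-1:ℝ) < a - 1))
      ((meas_beta _ _).aestronglyMeasurable) ?_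
    filter_upwards [ae_restrict_mem measurableSet_Ioc] with t ht
    have ht0 : 0 < t := ht.1
    have h1t : (0:ℝ) ≤ 1 + t := by linarith
    rw [norm_mul, norm_eq_abs, norm_eq_abs, abs_of_nonneg (rpow_nonneg ht0.le _),
      abs_of_nonneg (rpow_nonneg h1t _)]
    have : (1 + t) ^ (-(a + b)) ≤ 1 :=
      rpow_le_one_of_one_le_of_nonpos (by linarith) (by linarith)
    nlinarith [rpow_nonneg ht0.le (a - 1), rpow_nonneg h1t (-(a+b))]
  have h2 : IntegrableOn (fun t : ℝ => t ^ (a - 1) * (1 + t) ^ (-(a + b))) (Ioi 1) := by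
    refine Integrable.mono (integrableOn_Ioi_rpow_of_lt (by linarith : -b - 1 < -1) one_pos)
      ((meas_beta _ _).aestronglyMeasurable) ?_
    filter_upwards [ae_restrict_mem measurableSet_Ioi] with t ht
    have ht1 : (1:ℝ) < t := ht
    have ht0 : 0 < t := by linarith
    have h1t : (0:ℝ) ≤ 1 + t := by linarith
    rw [norm_mul, norm_eq_abs, norm_eq_abs, abs_of_nonneg (rpow_nonneg ht0.le _),
      abs_of_nonneg (rpow_nonneg h1t _)]
    have hb1 : (1 + t) ^ (-(a + b)) ≤ t ^ (-(a + b)) :=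
      rpow_le_rpow_of_nonpos ht0 (by linarith) (by linarith)
    calc t ^ (a - 1) * (1 + t) ^ (-(a + b)) ≤ t ^ (a - 1) * t ^ (-(a + b)) := by
          exact mul_le_mul_of_nonneg_left hb1 (rpow_nonneg ht0.le _)
      _ = t ^ (-b - 1) := by rw [← rpow_add ht0]; ring_nf
      _ ≤ ‖t ^ (-b - 1)‖ := le_abs_self _
  have hu : Ioi (0:ℝ) = Ioc 0 1 ∪ Ioi 1 := (Ioc_union_Ioi_eq_Ioi (by norm_num)).symm
  rw [hu]
  exact h1.union h2

lemma beta_interval {a b : ℝ} (ha : 0 < a) (hb : 0 < b) :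
    ∫ x in (0:ℝ)..1, x ^ (a - 1) * (1 - x) ^ (b - 1) =
      Gamma a * Gamma b / Gamma (a + b) := by
  have key := Complex.Gamma_mul_Gamma_eq_betaIntegral
    (s := (a:ℂ)) (t := (b:ℂ)) (by simpa using ha) (by simpa using hb)
  have hbeta : Complex.betaIntegral (a:ℂ) (b:ℂ) =
      ((∫ x in (0:ℝ)..1, x ^ (a - 1) * (1 - x) ^ (b - 1) : ℝ) : ℂ) := by
    rw [Complex.betaIntegral, ← intervalIntegral.integral_ofReal]
    refine intervalIntegral.integral_congr fun x hx => ?_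
    rw [uIcc_of_le (by norm_num : (0:ℝ) ≤ 1)] at hx
    have hx0 : 0 ≤ x := hx.1
    have hx1 : 0 ≤ 1 - x := by linarith [hx.2]
    rw [Complex.ofReal_mul, Complex.ofReal_cpow hx0, Complex.ofReal_cpow hx1]
    push_cast
    ring
  rw [hbeta, ← Complex.ofReal_add, Complex.Gamma_ofReal, Complex.Gamma_ofReal,
    Complex.Gamma_ofReal] at key
  have : (Gamma a * Gamma b : ℝ) =
      Gamma (a + b) * ∫ x in (0:ℝ)..1, x ^ (a - 1) * (1 - x) ^ (b - 1) := by
    exact_mod_cast key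
  rw [this]
  field_simp [ (Real.Gamma_pos_of_pos (by linarith : (0:ℝ) < a + b)).ne' ]

lemma beta_Ioi {a b : ℝ} (ha : 0 < a) (hb : 0 < b) :
    ∫ t in Ioi (0:ℝ), t ^ (a - 1) * (1 + t) ^ (-(a + b)) =
      Gamma a * Gamma b / Gamma (a + b) := by
  have hderiv : ∀ x ∈ Ioo (0:ℝ) 1,
      HasDerivWithinAt (fun x : ℝ => x⁻¹ - 1) (-(x^2)⁻¹) (Ioo 0 1) x := fun x hx =>
    ((hasDerivAt_inv hx.1.ne').sub_const 1).hasDerivWithinAt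
  have hinj : InjOn (fun x : ℝ => x⁻¹ - 1) (Ioo 0 1) := by
    intro x hx y hy h
    have : x⁻¹ = y⁻¹ := by dsimp at h; linarith
    exact inv_injective this
  have himg : (fun x : ℝ => x⁻¹ - 1) '' Ioo 0 1 = Ioi 0 := by
    ext t
    constructor
    · rintro ⟨x, ⟨hx0, hx1⟩, rfl⟩
      have : 1 < x⁻¹ := (one_lt_inv_iff₀).2 ⟨hx0, hx1⟩
      exact mem_Ioi.2 (by linarith)
    · intro ht
      have ht' : (0:ℝ) < t := ht
      refine ⟨(1 + t)⁻¹, ⟨by positivity, ?_⟩, ?_⟩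
      · rw [inv_lt_one_iff₀]; right; linarith
      · simp only [inv_inv]; ring
  rw [← himg, integral_image_eq_integral_abs_deriv_smul measurableSet_Ioo hderiv hinj]
  have : ∀ x ∈ Ioo (0:ℝ) 1,
      |(-(x^2)⁻¹)| • ((x⁻¹ - 1) ^ (a - 1) * (1 + (x⁻¹ - 1)) ^ (-(a + b))) =
        x ^ (b - 1) * (1 - x) ^ (a - 1) := by
    intro x hx
    obtain ⟨hx0, hx1⟩ := hx
    have hx1' : (0:ℝ) ≤ 1 - x := by linarith
    have hxinv : x⁻¹ - 1 = (1 - x) / x := by field_simp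
    rw [smul_eq_mul, abs_neg, abs_inv, abs_of_nonneg (by positivity : (0:ℝ) ≤ x^2)]
    have e1 : ((1 - x) / x) ^ (a - 1) = (1 - x) ^ (a - 1) * x ^ (1 - a) := by
      rw [div_rpow hx1' hx0.le, div_eq_mul_inv, ← rpow_neg hx0.le, neg_sub]
    have e2 : (1 + (1 - x) / x) = x⁻¹ := by field_simp; ring
    have e3 : (x⁻¹) ^ (-(a + b)) = x ^ (a + b) := by
      rw [inv_rpow hx0.le, ← rpow_neg hx0.le, neg_neg]
    have e4 : (x ^ 2)⁻¹ = x ^ (-2:ℝ) := by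
      rw [← rpow_natCast x 2, ← rpow_neg hx0.le]; norm_num
    rw [hxinv, e2, e1, e3, e4]
    calc x ^ (-2:ℝ) * ((1 - x) ^ (a - 1) * x ^ (1 - a) * x ^ (a + b))
        = (1 - x) ^ (a - 1) * (x ^ (-2:ℝ) * x ^ (1 - a) * x ^ (a + b)) := by ring
      _ = (1 - x) ^ (a - 1) * x ^ ((-2:ℝ) + (1 - a) + (a + b)) := by
          rw [rpow_add hx0 ((-2:ℝ) + (1 - a)) (a + b), rpow_add hx0 (-2:ℝ) (1 - a)]
      _ = x ^ (b - 1) * (1 - x) ^ (a - 1) := by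
          rw [show (-2:ℝ) + (1 - a) + (a + b) = b - 1 by ring]; ring
  rw [setIntegral_congr_fun measurableSet_Ioo this]
  rw [← integral_Ioc_eq_integral_Ioo,
    ← intervalIntegral.integral_of_le (by norm_num : (0:ℝ) ≤ 1)]
  rw [beta_interval hb ha, add_comm b a, mul_comm (Gamma b) _]

lemma one_sub_inv_pow_le (τ : ℕ) {t : ℝ} (ht : 0 ≤ t) :
    1 - (1 + t) ^ (-(τ:ℝ)) ≤ τ * t := by
  have h1t : (0:ℝ) < 1 + t := by linarith
  rw [rpow_neg h1t.le, rpow_natCast]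
  induction τ with
  | zero => simp
  | succ n ih =>
    have hQ1 : (1:ℝ) ≤ (1 + t) ^ n := one_le_pow₀ (by linarith)
    have hQ0 : (0:ℝ) < (1 + t) ^ n := by positivity
    have hQi : ((1 + t) ^ n)⁻¹ * (1 + t) ^ n = 1 := inv_mul_cancel₀ hQ0.ne'
    have hci : (1 + t)⁻¹ * (1 + t) = 1 := inv_mul_cancel₀ h1t.ne'
    have hb : 1 - (1 + t)⁻¹ ≤ t := by
      nlinarith [hci, inv_pos.2 h1t, mul_nonneg (mul_nonneg (inv_pos.2 h1t).le ht) ht]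
    have hQile : ((1 + t) ^ n)⁻¹ ≤ 1 := inv_le_one_of_one_le₀ hQ1
    have hQipos : 0 < ((1 + t) ^ n)⁻¹ := inv_pos.2 hQ0
    rw [pow_succ, mul_inv]
    push_cast
    nlinarith [mul_nonneg hQipos.le (sub_nonneg.2 hb)]

lemma rpow_neg_nat_le_one {t : ℝ} (ht : 0 ≤ t) (c : ℝ) (hc : c ≤ 0) :
    (1 + t) ^ c ≤ 1 :=
  rpow_le_one_of_one_le_of_nonpos (by linarith) hc

lemma integrableOn_f {s : ℝ} (hs0 : 0 < s) (hs1 : s < 1) (τ : ℕ) :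
    IntegrableOn (fun t : ℝ => t ^ (-s - 1) * (1 - (1 + t) ^ (-(τ:ℝ)))) (Ioi 0) := by
  have hmeas : Measurable (fun t : ℝ => t ^ (-s - 1) * (1 - (1 + t) ^ (-(τ:ℝ)))) := by
    fun_prop
  have hnn : ∀ t : ℝ, 0 < t → 0 ≤ 1 - (1 + t) ^ (-(τ:ℝ)) := fun t ht => by
    have := rpow_neg_nat_le_one ht.le (-(τ:ℝ)) (neg_nonpos.2 (Nat.cast_nonneg τ))
    linarith
  have h1 : IntegrableOn (fun t : ℝ => t ^ (-s - 1) * (1 - (1 + t) ^ (-(τ:ℝ)))) (Ioc 0 1) := by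
    refine Integrable.mono
      ((integrableOn_rpow_Ioc (by linarith : (-1:ℝ) < -s)).const_mul (τ:ℝ))
      hmeas.aestronglyMeasurable ?_
    filter_upwards [ae_restrict_mem measurableSet_Ioc] with t ht
    have ht0 : 0 < t := ht.1
    rw [norm_mul, norm_eq_abs, norm_eq_abs, abs_of_nonneg (rpow_nonneg ht0.le _),
      abs_of_nonneg (hnn t ht0), norm_eq_abs,
      abs_of_nonneg (by positivity : (0:ℝ) ≤ (τ:ℝ) * t ^ (-s))]
    calc t ^ (-s - 1) * (1 - (1 + t) ^ (-(τ:ℝ))) ≤ t ^ (-s - 1) * ((τ:ℝ) * t) := by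
          exact mul_le_mul_of_nonneg_left (one_sub_inv_pow_le τ ht0.le) (rpow_nonneg ht0.le _)
      _ = (τ:ℝ) * (t ^ (-s - 1) * t ^ (1:ℝ)) := by rw [rpow_one]; ring
      _ = (τ:ℝ) * t ^ (-s) := by rw [← rpow_add ht0]; norm_num
  have h2 : IntegrableOn (fun t : ℝ => t ^ (-s - 1) * (1 - (1 + t) ^ (-(τ:ℝ)))) (Ioi 1) := by
    refine Integrable.mono (integrableOn_Ioi_rpow_of_lt (by linarith : -s - 1 < -1) one_pos)
      hmeas.aestronglyMeasurable ?_
    filter_upwards [ae_restrict_mem measurableSet_Ioi] with t ht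
    have ht0 : (0:ℝ) < t := lt_trans one_pos ht
    rw [norm_mul, norm_eq_abs, norm_eq_abs, abs_of_nonneg (rpow_nonneg ht0.le _),
      abs_of_nonneg (hnn t ht0)]
    have hle1 : 1 - (1 + t) ^ (-(τ:ℝ)) ≤ 1 := by
      have : (0:ℝ) ≤ (1 + t) ^ (-(τ:ℝ)) := rpow_nonneg (by linarith) _
      linarith
    calc t ^ (-s - 1) * (1 - (1 + t) ^ (-(τ:ℝ))) ≤ t ^ (-s - 1) * 1 :=
          mul_le_mul_of_nonneg_left hle1 (rpow_nonneg ht0.le _)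
      _ = t ^ (-s - 1) := mul_one _
  have hu : Ioi (0:ℝ) = Ioc 0 1 ∪ Ioi 1 := (Ioc_union_Ioi_eq_Ioi (by norm_num)).symm
  rw [hu]
  exact h1.union h2
lemma J_val {s : ℝ} (hs0 : 0 < s) (hs1 : s < 1) (τ : ℕ) (hτ : 0 < τ) :
    ∫ t in Ioi (0:ℝ), t ^ (-s - 1) * (1 - (1 + t) ^ (-(τ:ℝ))) =
      ((τ:ℝ) / s) * (Gamma (1 - s) * Gamma ((τ:ℝ) + s) /
        Gamma ((1 - s) + ((τ:ℝ) + s))) := by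
  induction τ, hτ using Nat.le_induction with
  | base =>
    have hpt : ∀ t ∈ Ioi (0:ℝ), t ^ (-s - 1) * (1 - (1 + t) ^ (-((1:ℕ):ℝ))) =
        t ^ ((1 - s) - 1) * (1 + t) ^ (-((1 - s) + s)) := by
      intro t ht
      have ht0 : (0:ℝ) < t := ht
      have h1t : (0:ℝ) < 1 + t := by linarith
      rw [Nat.cast_one, rpow_neg_one, show -((1 - s) + s) = (-1:ℝ) by ring, rpow_neg_one,
        show (1 - s) - 1 = -s by ring, show 1 - (1 + t)⁻¹ = t * (1 + t)⁻¹ by field_simp; ring]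
      calc t ^ (-s - 1) * (t * (1 + t)⁻¹)
          = (t ^ (-s - 1) * t ^ (1:ℝ)) * (1 + t)⁻¹ := by rw [rpow_one]; ring
        _ = t ^ (-s) * (1 + t)⁻¹ := by rw [← rpow_add ht0]; norm_num
    rw [setIntegral_congr_fun measurableSet_Ioi hpt, beta_Ioi (by linarith) hs0]
    have h2 : Gamma (2:ℝ) = 1 := by
      rw [show (2:ℝ) = 1 + 1 by norm_num, Gamma_add_one one_ne_zero, Gamma_one, mul_one]
    rw [show (1:ℝ) - s + s = 1 by ring, Gamma_one, Nat.cast_one,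
      show (1:ℝ) + s = s + 1 by ring, Gamma_add_one hs0.ne',
      show (1:ℝ) - s + (s + 1) = 2 by ring, h2]
    field_simp
  | succ τ hτ1 IH =>
    have hτpos : (0:ℝ) < (τ:ℝ) := by exact_mod_cast hτ1
    push_cast
    have hpt : ∀ t ∈ Ioi (0:ℝ), t ^ (-s - 1) * (1 - (1 + t) ^ (-((τ:ℝ) + 1))) =
        t ^ (-s - 1) * (1 - (1 + t) ^ (-(τ:ℝ))) +
          t ^ ((1 - s) - 1) * (1 + t) ^ (-((1 - s) + ((τ:ℝ) + s))) := by
      intro t ht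
      have ht0 : (0:ℝ) < t := ht
      have h1t : (0:ℝ) < 1 + t := by linarith
      have e1 : (1 + t) ^ (-(τ:ℝ)) = (1 + t) ^ (-((τ:ℝ) + 1)) * (1 + t) := by
        rw [show -(τ:ℝ) = -((τ:ℝ) + 1) + 1 by ring, rpow_add_one h1t.ne']
      have e2 : t ^ ((1 - s) - 1) = t ^ (-s - 1) * t := by
        rw [show (1 - s) - 1 = (-s - 1) + 1 by ring, rpow_add_one ht0.ne']
      rw [e1, e2, show -((1 - s) + ((τ:ℝ) + s)) = -((τ:ℝ) + 1) by ring]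
      ring
    rw [setIntegral_congr_fun measurableSet_Ioi hpt,
      integral_add (integrableOn_f hs0 hs1 τ)
        (integrableOn_beta_aux (by linarith) (by positivity)),
      IH, beta_Ioi (by linarith : (0:ℝ) < 1 - s) (by positivity : (0:ℝ) < (τ:ℝ) + s)]
    have hD : (1:ℝ) - s + ((τ:ℝ) + s) = (τ:ℝ) + 1 := by ring
    rw [hD, show (τ:ℝ) + 1 + s = ((τ:ℝ) + s) + 1 by ring,
      Gamma_add_one (by positivity : (0:ℝ) < (τ:ℝ) + s).ne',
      show (1:ℝ) - s + (((τ:ℝ) + s) + 1) = ((τ:ℝ) + 1) + 1 by ring,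
      Gamma_add_one (by positivity : (0:ℝ) < (τ:ℝ) + 1).ne']
    have hG : (0:ℝ) < Gamma ((τ:ℝ) + 1) := Gamma_pos_of_pos (by positivity)
    field_simp

theorem stmt_5 (α : ℝ) (hα : 2 < α) (U : ℝ) (hU : 0 < U) (τ : ℕ) (hτ : 0 < τ) :
    (∫ u : EuclideanSpace ℝ (Fin 2),
        (1 - (1 + U * ‖u‖ ^ (-α)) ^ (-(τ : ℝ)))) =
      π * τ * U ^ (2 / α) *
        (Real.Gamma (1 - 2 / α) * Real.Gamma ((τ : ℝ) + 2 / α) /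
          Real.Gamma ((1 - 2 / α) + ((τ : ℝ) + 2 / α))) := by
  have hα0 : (0:ℝ) < α := by linarith
  have hs0 : (0:ℝ) < 2 / α := by positivity
  have hs1 : 2 / α < 1 := (div_lt_one hα0).2 hα
  have key := integral_fun_norm_addHaar (volume : Measure (EuclideanSpace ℝ (Fin 2)))
      (fun r : ℝ => 1 - (1 + U * r ^ (-α)) ^ (-(τ:ℝ)))
  rw [show Module.finrank ℝ (EuclideanSpace ℝ (Fin 2)) = 2 from finrank_euclideanSpace_fin]
    at key
  have hball : (volume (Metric.ball (0 : EuclideanSpace ℝ (Fin 2)) 1)).toReal = π := by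
    rw [EuclideanSpace.volume_ball]
    have h2 : Gamma ((Fintype.card (Fin 2) : ℝ) / 2 + 1) = 1 := by
      rw [Fintype.card_fin, show ((2:ℕ):ℝ) / 2 + 1 = 1 + 1 by norm_num,
        Gamma_add_one one_ne_zero, Gamma_one, mul_one]
    rw [h2, Fintype.card_fin, show (Real.sqrt π) ^ 2 = π from Real.sq_sqrt pi_nonneg]
    simp [ENNReal.toReal_ofReal pi_nonneg]
  set B : ℝ := Gamma (1 - 2 / α) * Gamma ((τ : ℝ) + 2 / α) /
      Gamma ((1 - 2 / α) + ((τ : ℝ) + 2 / α)) with hB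
  have h1d : (∫ y in Ioi (0:ℝ), y * (1 - (1 + U * y ^ (-α)) ^ (-(τ:ℝ)))) =
      U ^ (2 / α) * α⁻¹ * (((τ:ℝ) / (2 / α)) * B) := by
    have hsub := integral_comp_rpow_Ioi
      (fun t : ℝ => α⁻¹ * t ^ (-(2 / α) - 1) * (1 - (1 + U * t) ^ (-(τ:ℝ))))
      (p := -α) (neg_ne_zero.2 hα0.ne')
    have e : ∀ x ∈ Ioi (0:ℝ),
        (|(-α)| * x ^ (-α - 1)) • (α⁻¹ * (x ^ (-α)) ^ (-(2 / α) - 1) *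
          (1 - (1 + U * (x ^ (-α))) ^ (-(τ:ℝ)))) =
        x * (1 - (1 + U * x ^ (-α)) ^ (-(τ:ℝ))) := by
      intro x hx
      have hx0 : (0:ℝ) < x := hx
      rw [smul_eq_mul, abs_neg, abs_of_pos hα0, ← rpow_mul hx0.le,
        show (-α) * (-(2 / α) - 1) = α + 2 by field_simp; ring]
      have hxx : x ^ (-α - 1) * x ^ (α + 2) = x := by
        rw [← rpow_add hx0, show -α - 1 + (α + 2) = (1:ℝ) by ring, rpow_one]
      calc α * x ^ (-α - 1) * (α⁻¹ * x ^ (α + 2) * (1 - (1 + U * x ^ (-α)) ^ (-(τ:ℝ))))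
          = (α * α⁻¹) * ((x ^ (-α - 1) * x ^ (α + 2)) *
              (1 - (1 + U * x ^ (-α)) ^ (-(τ:ℝ)))) := by ring
        _ = x * (1 - (1 + U * x ^ (-α)) ^ (-(τ:ℝ))) := by
            rw [mul_inv_cancel₀ hα0.ne', hxx, one_mul]
    rw [← setIntegral_congr_fun measurableSet_Ioi e, hsub]
    have hscale := integral_comp_mul_left_Ioi
      (fun u : ℝ => α⁻¹ * (U⁻¹ * u) ^ (-(2 / α) - 1) * (1 - (1 + u) ^ (-(τ:ℝ)))) 0 hU
    simp only [inv_mul_cancel_left₀ hU.ne', mul_zero] at hscale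
    rw [hscale, smul_eq_mul]
    have e2 : ∀ u ∈ Ioi (0:ℝ),
        α⁻¹ * (U⁻¹ * u) ^ (-(2 / α) - 1) * (1 - (1 + u) ^ (-(τ:ℝ))) =
        (α⁻¹ * U ^ (2 / α + 1)) *
          (u ^ (-(2 / α) - 1) * (1 - (1 + u) ^ (-(τ:ℝ)))) := by
      intro u hu
      have hu0 : (0:ℝ) < u := hu
      rw [mul_rpow (inv_nonneg.2 hU.le) hu0.le, inv_rpow hU.le, ← rpow_neg hU.le,
        show -(-(2 / α) - 1) = 2 / α + 1 by ring]
      ring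
    rw [setIntegral_congr_fun measurableSet_Ioi e2, integral_const_mul,
      J_val hs0 hs1 τ hτ, ← hB]
    rw [rpow_add hU, rpow_one]
    field_simp
  rw [key, measureReal_def, hball, show (2 - 1 : ℕ) = 1 from rfl]
  simp only [pow_one, smul_eq_mul, nsmul_eq_mul]
  rw [h1d]
  have hτα : (τ:ℝ) / (2 / α) = (τ:ℝ) * α / 2 := by
    field_simp
  rw [hτα]
  field_simp
  ring
end

section
/- Let α > 2, let n be a positive integer, let U : Fin n → ℝ with U i > 0 for all i, and let τ : Fin n → ℕ. Then the function u ↦ 1 − ∏_{i} (1 + U i · ‖u‖^(−α))^(−τ i) is Lebesgue integrable on ℝ². -/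
open MeasureTheory Real

private lemma aux_pow (y : ℝ) (h0 : 0 ≤ y) (h1 : y ≤ 1) (m : ℕ) :
    1 - y ^ m ≤ m * (1 - y) := by
  induction m with
  | zero => simp
  | succ k ih =>
    have hy : y ^ k ≤ 1 := pow_le_one₀ h0 h1
    have : 1 - y ^ (k + 1) = (1 - y) + y * (1 - y ^ k) := by ring
    rw [this]
    have h2 : y * (1 - y ^ k) ≤ 1 - y ^ k := by
      nlinarith [pow_nonneg h0 k]
    push_cast
    nlinarith

private lemma aux_prod {n : ℕ} (f : Fin n → ℝ) (h0 : ∀ i, 0 ≤ f i) (h1 : ∀ i, f i ≤ 1)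
    (s : Finset (Fin n)) : 1 - ∏ i ∈ s, f i ≤ ∑ i ∈ s, (1 - f i) := by
  induction s using Finset.induction with
  | empty => simp
  | @insert a s hx ih =>
    rw [Finset.prod_insert hx, Finset.sum_insert hx]
    have hp0 : 0 ≤ ∏ i ∈ s, f i := Finset.prod_nonneg fun i _ => h0 i
    have hp1 : ∏ i ∈ s, f i ≤ 1 := Finset.prod_le_one (fun i _ => h0 i) fun i _ => h1 i
    nlinarith [h0 a, h1 a]

private lemma aux_one_sub_rpow (a : ℝ) (ha : 0 ≤ a) (m : ℕ) :
    1 - (1 + a) ^ (-(m : ℝ)) ≤ m * a := by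
  have h1 : (0:ℝ) < 1 + a := by linarith
  have hrw : (1 + a) ^ (-(m : ℝ)) = ((1 + a)⁻¹) ^ m := by
    rw [Real.rpow_neg h1.le, Real.rpow_natCast, inv_pow]
  rw [hrw]
  have hy0 : 0 ≤ (1 + a)⁻¹ := by positivity
  have hy1 : (1 + a)⁻¹ ≤ 1 := by
    rw [inv_le_one_iff₀]; right; linarith
  have := aux_pow _ hy0 hy1 m
  have hsub : 1 - (1 + a)⁻¹ ≤ a := by
    nlinarith [mul_inv_cancel₀ (ne_of_gt h1), inv_pos.mpr h1]
  have hm : (0:ℝ) ≤ (m:ℝ) := Nat.cast_nonneg m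
  nlinarith

theorem stmt_6 (α : ℝ) (hα : 2 < α) (n : ℕ) (hn : 0 < n)
    (U : Fin n → ℝ) (hU : ∀ i, 0 < U i) (τ : Fin n → ℕ) :
    Integrable
      (fun u : EuclideanSpace ℝ (Fin 2) =>
        1 - ∏ i, (1 + U i * ‖u‖ ^ (-α)) ^ (-(τ i : ℝ))) := by
  set C : ℝ := ∑ i, (τ i : ℝ) * U i with hC
  have hC0 : 0 ≤ C := Finset.sum_nonneg fun i _ => mul_nonneg (Nat.cast_nonneg _) (hU i).le
  set K : ℝ := max 1 C * 2 ^ α with hK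
  have h2 : (0:ℝ) < 2 ^ α := rpow_pos_of_pos (by norm_num) α
  have hKC : C ≤ max 1 C := le_max_right _ _
  have hK1 : (1:ℝ) ≤ max 1 C := le_max_left _ _
  have key : ∀ u : EuclideanSpace ℝ (Fin 2),
      0 ≤ 1 - ∏ i, (1 + U i * ‖u‖ ^ (-α)) ^ (-(τ i : ℝ)) ∧
      1 - ∏ i, (1 + U i * ‖u‖ ^ (-α)) ^ (-(τ i : ℝ)) ≤ 1 ∧
      1 - ∏ i, (1 + U i * ‖u‖ ^ (-α)) ^ (-(τ i : ℝ)) ≤ C * ‖u‖ ^ (-α) := by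
    intro u
    set t : ℝ := ‖u‖ ^ (-α) with ht
    have ht0 : 0 ≤ t := rpow_nonneg (norm_nonneg u) _
    set f : Fin n → ℝ := fun i => (1 + U i * t) ^ (-(τ i : ℝ)) with hf
    have hbase : ∀ i, (1:ℝ) ≤ 1 + U i * t := fun i => by
      nlinarith [mul_nonneg (hU i).le ht0]
    have hf0 : ∀ i, 0 ≤ f i := fun i => rpow_nonneg (by linarith [hbase i]) _
    have hf1 : ∀ i, f i ≤ 1 := fun i =>
      rpow_le_one_of_one_le_of_nonpos (hbase i) (neg_nonpos.mpr (Nat.cast_nonneg _))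
    have hp0 : 0 ≤ ∏ i, f i := Finset.prod_nonneg fun i _ => hf0 i
    have hp1 : ∏ i, f i ≤ 1 := Finset.prod_le_one (fun i _ => hf0 i) fun i _ => hf1 i
    refine ⟨by linarith, by linarith, ?_⟩
    have h1 := aux_prod f hf0 hf1 Finset.univ
    have h2 : ∑ i, (1 - f i) ≤ C * t := by
      rw [hC, Finset.sum_mul]
      refine Finset.sum_le_sum fun i _ => ?_
      calc 1 - f i ≤ (τ i : ℝ) * (U i * t) :=
            aux_one_sub_rpow (U i * t) (mul_nonneg (hU i).le ht0) (τ i)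
        _ = (τ i : ℝ) * U i * t := by ring
    linarith
  refine Integrable.mono' (g := fun u : EuclideanSpace ℝ (Fin 2) => K * (1 + ‖u‖) ^ (-α))
    ?_ ?_ (ae_of_all _ ?_)
  · refine (integrable_one_add_norm ?_).const_mul K
    simp only [finrank_euclideanSpace_fin]
    norm_num
    linarith
  · apply Measurable.aestronglyMeasurable
    measurability
  · intro u
    obtain ⟨h0, h1', hCb⟩ := key u
    rw [Real.norm_of_nonneg h0]
    have hn1 : (0:ℝ) < 1 + ‖u‖ := by positivity
    rcases le_or_gt ‖u‖ 1 with hle | hgt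
    · -- f ≤ 1 ≤ max 1 C * 2^α * (1+‖u‖)^(-α)
      have hb : (2:ℝ) ^ (-α) ≤ (1 + ‖u‖) ^ (-α) := by
        apply Real.rpow_le_rpow_of_nonpos hn1 (by linarith) (by linarith)
      have : (1:ℝ) = 2 ^ α * 2 ^ (-α) := by
        rw [← Real.rpow_add (by norm_num)]; simp
      calc 1 - ∏ i, (1 + U i * ‖u‖ ^ (-α)) ^ (-(τ i : ℝ)) ≤ 1 := h1'
        _ = 2 ^ α * 2 ^ (-α) := this
        _ ≤ 2 ^ α * (1 + ‖u‖) ^ (-α) := mul_le_mul_of_nonneg_left hb h2.le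
        _ = 1 * (2 ^ α * (1 + ‖u‖) ^ (-α)) := by ring
        _ ≤ max 1 C * (2 ^ α * (1 + ‖u‖) ^ (-α)) :=
            mul_le_mul_of_nonneg_right hK1
              (mul_nonneg h2.le (Real.rpow_nonneg hn1.le _))
        _ = K * (1 + ‖u‖) ^ (-α) := by rw [hK]; ring
    · -- f ≤ C ‖u‖^(-α) ≤ C 2^α (1+‖u‖)^(-α)
      have hu0 : (0:ℝ) < ‖u‖ := by linarith
      have hb : (1 + ‖u‖) ^ (-α) ≥ (2 * ‖u‖) ^ (-α) := by
        apply Real.rpow_le_rpow_of_nonpos hn1 (by linarith) (by linarith)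
      have hmul : (2 * ‖u‖) ^ (-α) = 2 ^ (-α) * ‖u‖ ^ (-α) :=
        Real.mul_rpow (by norm_num) hu0.le
      have h2' : ‖u‖ ^ (-α) = 2 ^ α * (2 * ‖u‖) ^ (-α) := by
        rw [hmul, ← mul_assoc, ← Real.rpow_add (by norm_num)]
        simp
      calc 1 - ∏ i, (1 + U i * ‖u‖ ^ (-α)) ^ (-(τ i : ℝ)) ≤ C * ‖u‖ ^ (-α) := hCb
        _ = C * (2 ^ α * (2 * ‖u‖) ^ (-α)) := by rw [← h2']
        _ ≤ max 1 C * (2 ^ α * (1 + ‖u‖) ^ (-α)) := by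
            have hx0 : (0:ℝ) ≤ (2 * ‖u‖) ^ (-α) := Real.rpow_nonneg (by positivity) _
            have hx1 : (0:ℝ) ≤ (1 + ‖u‖) ^ (-α) := Real.rpow_nonneg hn1.le _
            apply mul_le_mul hKC (mul_le_mul_of_nonneg_left hb h2.le)
              (mul_nonneg h2.le hx0) (by linarith)
        _ = K * (1 + ‖u‖) ^ (-α) := by rw [hK]; ring
end

section
/- Let α > 0, let a_1, a_2, b_1, b_2 be real numbers with 0 < a_1 ≤ a_2 and 0 ≤ b_1 ≤ b_2, and let 0 < ε < 1. Define, for i ∈ {1, 2} and x ≥ 0: ϑ_i(x) = exp(−a_i·(2^x − 1) − b_i·(2^x − 1)^(2/α)) and φ_i(x) = x · ϑ_i(x). Let M = sup{ φ_1(z) : z ≥ 0 and ϑ_1(z) ≥ 1 − ε }. Then for all z_1, z_2 ≥ 0 and all β ∈ [0, 1] such that ϑ_1(z_1) ≥ 1 − ε and ϑ_2(z_2) ≥ 1 − ε, one has β²·φ_1(z_1) + (1 − β²)·φ_2(z_2) ≤ M; consequently the supremum of the constrained throughput β²·φ_1(z_1) + (1 − β²)·φ_2(z_2) over the feasible set equals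 M and is approached with β² = 1 (whence the optimal rate for user 2 is R_2 = (1 − β²)·z_2 = 0). -/
open Real

theorem stmt_15 (α a₁ a₂ b₁ b₂ ε : ℝ) (hα : 0 < α)
    (ha₁ : 0 < a₁) (ha : a₁ ≤ a₂) (hb₁ : 0 ≤ b₁) (hb : b₁ ≤ b₂)
    (hε₀ : 0 < ε) (hε₁ : ε < 1)
    (ϑ₁ ϑ₂ φ₁ φ₂ : ℝ → ℝ)
    (hϑ₁ : ∀ x, ϑ₁ x =
      Real.exp (-(a₁ * ((2 : ℝ) ^ x - 1)) - b₁ * ((2 : ℝ) ^ x - 1) ^ (2 / α)))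
    (hϑ₂ : ∀ x, ϑ₂ x =
      Real.exp (-(a₂ * ((2 : ℝ) ^ x - 1)) - b₂ * ((2 : ℝ) ^ x - 1) ^ (2 / α)))
    (hφ₁ : ∀ x, φ₁ x = x * ϑ₁ x) (hφ₂ : ∀ x, φ₂ x = x * ϑ₂ x)
    (M : ℝ) (hM : M = sSup {y : ℝ | ∃ z, 0 ≤ z ∧ 1 - ε ≤ ϑ₁ z ∧ y = φ₁ z}) :
    (∀ z₁ z₂ β : ℝ, 0 ≤ z₁ → 0 ≤ z₂ → 0 ≤ β → β ≤ 1 →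
        1 - ε ≤ ϑ₁ z₁ → 1 - ε ≤ ϑ₂ z₂ →
        β ^ 2 * φ₁ z₁ + (1 - β ^ 2) * φ₂ z₂ ≤ M) ∧
      sSup {y : ℝ | ∃ z₁ z₂ β : ℝ, 0 ≤ z₁ ∧ 0 ≤ z₂ ∧ 0 ≤ β ∧ β ≤ 1 ∧
          1 - ε ≤ ϑ₁ z₁ ∧ 1 - ε ≤ ϑ₂ z₂ ∧
          y = β ^ 2 * φ₁ z₁ + (1 - β ^ 2) * φ₂ z₂} = M := by
  set S : Set ℝ := {y : ℝ | ∃ z, 0 ≤ z ∧ 1 - ε ≤ ϑ₁ z ∧ y = φ₁ z} with hS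
  set T : Set ℝ := {y : ℝ | ∃ z₁ z₂ β : ℝ, 0 ≤ z₁ ∧ 0 ≤ z₂ ∧ 0 ≤ β ∧ β ≤ 1 ∧
          1 - ε ≤ ϑ₁ z₁ ∧ 1 - ε ≤ ϑ₂ z₂ ∧
          y = β ^ 2 * φ₁ z₁ + (1 - β ^ 2) * φ₂ z₂} with hT
  have hlog2 : (0:ℝ) < Real.log 2 := Real.log_pos (by norm_num)
  have h2 : ∀ z : ℝ, 0 ≤ z → 0 ≤ (2:ℝ)^z - 1 := by
    intro z hz
    have h : (2:ℝ)^(0:ℝ) ≤ (2:ℝ)^z := Real.rpow_le_rpow_of_exponent_le (by norm_num) hz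
    rw [Real.rpow_zero] at h; linarith
  have hs : ∀ z : ℝ, 0 ≤ z → 0 ≤ ((2:ℝ)^z - 1) ^ (2/α) := fun z hz =>
    Real.rpow_nonneg (h2 z hz) _
  -- ϑ₁ z ≤ 1 for z ≥ 0
  have hϑ₁le : ∀ z : ℝ, 0 ≤ z → ϑ₁ z ≤ 1 := by
    intro z hz
    rw [hϑ₁]
    apply Real.exp_le_one_iff.mpr
    have := h2 z hz
    have := hs z hz
    nlinarith
  -- ϑ₂ ≤ ϑ₁ for z ≥ 0
  have hϑ21 : ∀ z : ℝ, 0 ≤ z → ϑ₂ z ≤ ϑ₁ z := by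
    intro z hz
    rw [hϑ₁, hϑ₂]
    apply Real.exp_le_exp.mpr
    have := h2 z hz
    have := hs z hz
    nlinarith
  -- bound on feasible z
  set B : ℝ := (-Real.log (1-ε) / a₁) / Real.log 2 with hB
  have hεpos : (0:ℝ) < 1 - ε := by linarith
  have hub : ∀ y ∈ S, y ≤ B := by
    rintro y ⟨z, hz, hfeas, rfl⟩
    have ht := h2 z hz
    have hsz := hs z hz
    -- from feasibility, a₁ * (2^z - 1) ≤ -log(1-ε)
    have hlog : Real.log (1-ε) ≤ -(a₁ * ((2:ℝ)^z - 1)) - b₁ * ((2:ℝ)^z - 1) ^ (2/α) := by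
      have h := (Real.log_le_iff_le_exp hεpos).mpr (by rw [hϑ₁] at hfeas; exact hfeas)
      exact h
    have hta : a₁ * ((2:ℝ)^z - 1) ≤ -Real.log (1-ε) := by nlinarith
    -- z * log 2 ≤ 2^z - 1
    have hzl : z * Real.log 2 ≤ (2:ℝ)^z - 1 := by
      have h := Real.add_one_le_exp (z * Real.log 2)
      have h2z : (2:ℝ)^z = Real.exp (Real.log 2 * z) := Real.rpow_def_of_pos (by norm_num) z
      rw [h2z, mul_comm (Real.log 2) z]; linarith
    have hzB : z ≤ B := by
      rw [hB]
      rw [div_div, le_div_iff₀ (by positivity)]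
      have : a₁ * (z * Real.log 2) ≤ a₁ * ((2:ℝ)^z - 1) := by
        exact mul_le_mul_of_nonneg_left hzl (le_of_lt ha₁)
      nlinarith
    have : φ₁ z ≤ z := by
      rw [hφ₁]
      have := hϑ₁le z hz
      nlinarith [Real.exp_pos (-(a₁ * ((2 : ℝ) ^ z - 1)) - b₁ * ((2 : ℝ) ^ z - 1) ^ (2 / α))]
    linarith
  have hbddS : BddAbove S := ⟨B, hub⟩
  have hϑ₁0 : ϑ₁ 0 = 1 := by
    rw [hϑ₁]
    rw [Real.rpow_zero]
    simp [Real.zero_rpow (by positivity : (2/α) ≠ 0)]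
  have hϑ₂0 : ϑ₂ 0 = 1 := by
    rw [hϑ₂]
    rw [Real.rpow_zero]
    simp [Real.zero_rpow (by positivity : (2/α) ≠ 0)]
  have h0S : (0:ℝ) ∈ S := ⟨0, le_refl 0, by rw [hϑ₁0]; linarith, by rw [hφ₁]; ring⟩
  have hSne : S.Nonempty := ⟨0, h0S⟩
  -- Part 1
  have part1 : ∀ z₁ z₂ β : ℝ, 0 ≤ z₁ → 0 ≤ z₂ → 0 ≤ β → β ≤ 1 →
      1 - ε ≤ ϑ₁ z₁ → 1 - ε ≤ ϑ₂ z₂ →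
      β ^ 2 * φ₁ z₁ + (1 - β ^ 2) * φ₂ z₂ ≤ M := by
    intro z₁ z₂ β hz₁ hz₂ hβ0 hβ1 hf₁ hf₂
    have h1 : φ₁ z₁ ≤ M := hM ▸ le_csSup hbddS ⟨z₁, hz₁, hf₁, rfl⟩
    have hf₂' : 1 - ε ≤ ϑ₁ z₂ := le_trans hf₂ (hϑ21 z₂ hz₂)
    have h2' : φ₁ z₂ ≤ M := hM ▸ le_csSup hbddS ⟨z₂, hz₂, hf₂', rfl⟩
    have h3 : φ₂ z₂ ≤ φ₁ z₂ := by
      rw [hφ₁, hφ₂]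
      exact mul_le_mul_of_nonneg_left (hϑ21 z₂ hz₂) hz₂
    have hβsq : β ^ 2 ≤ 1 := by nlinarith
    have hβsq0 : 0 ≤ β ^ 2 := sq_nonneg β
    nlinarith [mul_le_mul_of_nonneg_left h1 hβsq0,
      mul_le_mul_of_nonneg_left (le_trans h3 h2') (by linarith : (0:ℝ) ≤ 1 - β ^ 2)]
  refine ⟨part1, ?_⟩
  have hST : S ⊆ T := by
    rintro y ⟨z, hz, hf, rfl⟩
    exact ⟨z, 0, 1, hz, le_refl 0, by norm_num, le_refl 1, hf,
      by rw [hϑ₂0]; linarith, by rw [hφ₂]; ring⟩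
  have hubT : ∀ y ∈ T, y ≤ M := by
    rintro y ⟨z₁, z₂, β, hz₁, hz₂, hβ0, hβ1, hf₁, hf₂, rfl⟩
    exact part1 z₁ z₂ β hz₁ hz₂ hβ0 hβ1 hf₁ hf₂
  have hTne : T.Nonempty := ⟨0, hST h0S⟩
  apply le_antisymm
  · exact csSup_le hTne hubT
  · rw [hM]
    exact csSup_le_csSup ⟨M, hubT⟩ hSne hST
end
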